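/- arXiv:2503.17541 — 4 statements merged into one kernel-verified Lean document; each statement's English description precedes it below -/
import Mathlib

section
/- Let S = A[y] where A = k[x_1,…,x_{n-1}] is a positively Z-graded polynomial ring and deg(y) = d satisfies d ≥ deg(x_i) for all i. Fix e > 0 and set N = ⌈e/d⌉. Then the truncation decomposes as a sum of S-submodules: S_{≥e} = A_{≥e} + A_{≥e−d}·(y) + A_{≥e−2d}·(y²) + ⋯ + A_{≥e−(N−1)d}·(y^{N−1}) + (y^N), where A_{≥e−di}·(y^i) denotes the S-submodule generated by products of elements of A of degree ≥ e−di with y^i. -/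
/-!
Background setup.  `MvPolynomial (Fin n) k` is the polynomial ring `S = k[x_1, …, x_n]`
over the field `k`, graded (possibly nonstandardly) by weights `w : Fin n → ℤ` with
`0 < w i`, with graded maximal ideal `m = maxIdeal k n = (x_1, …, x_n)`.

* `trunc k n w e` is the truncation `S_{≥e} = ⊕_{i ≥ e} S_i`, an `S`-submodule of `S`
  (realized as the `S`-span of the weighted-homogeneous elements of weighted degree `≥ e`;
  for positive weights this span is exactly `⊕_{i ≥ e} S_i`).
* `GrRing k n` is the associated graded ring `gr_m(S) = ⊕_{i≥0} m^i/m^{i+1}`, realized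
  as the quotient `Rees(m) ⧸ m·Rees(m)` of the Rees algebra of `m`; it is a standard
  graded polynomial ring over `k = S/m`.
* `GrMod k n M` is the associated graded module `gr_m(M) = ⊕_{i≥0} m^i M/m^{i+1} M` of an
  `S`-module `M`, realized as the quotient of the Rees module `⊕_i m^i M` by
  `m·(⊕_i m^i M)`; it is a module over `gr_m(S) = GrRing k n`.
* `grDeg1 k n` is the degree-one component `m/m²` of `gr_m(S)`, i.e. the set of linear
  forms of the standard graded ring `gr_m(S)`.
* `HasLinearResolution R Lin N` says that `N` admits a free resolution
  `⋯ → F_{i+1} → F_i → ⋯ → F_0 → N → 0` in which every differential is given by a matrix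
  all of whose entries lie in the set `Lin` of linear forms.  For a module generated in
  degree `0` over a standard graded `k`-algebra `R` (with `Lin = R_1`) this is the usual
  notion of a linear resolution: a graded free resolution `F_•` with `F_i` generated in
  degree `i`.
-/

set_option synthInstance.maxHeartbeats 1000000
set_option maxHeartbeats 1000000

noncomputable section
open MvPolynomial

/-- The graded maximal ideal `m = (x_1, …, x_n)` of `S = k[x_1, …, x_n]`. -/
def maxIdeal (k : Type) [Field k] (n : ℕ) : Ideal (MvPolynomial (Fin n) k) :=
  Ideal.span (Set.range MvPolynomial.X)

/-- The truncation `S_{≥e} = ⊕_{i ≥ e} S_i` of the `ℤ`-graded polynomial ring `S` with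
weights `w`. -/
def trunc (k : Type) [Field k] (n : ℕ) (w : Fin n → ℤ) (e : ℤ) :
    Submodule (MvPolynomial (Fin n) k) (MvPolynomial (Fin n) k) :=
  Submodule.span _ (⋃ (d : ℤ) (_ : e ≤ d),
    (MvPolynomial.weightedHomogeneousSubmodule k w d : Set (MvPolynomial (Fin n) k)))

/-- The ideal `m·Rees(m)` of the Rees algebra `Rees(m)`; the quotient by it is `gr_m(S)`. -/
def grIdeal (k : Type) [Field k] (n : ℕ) : Ideal ↥(reesAlgebra (maxIdeal k n)) :=
  (maxIdeal k n).map (algebraMap (MvPolynomial (Fin n) k) ↥(reesAlgebra (maxIdeal k n)))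

/-- The associated graded ring `gr_m(S) = ⊕_{i≥0} m^i/m^{i+1} = Rees(m)/m·Rees(m)`. -/
abbrev GrRing (k : Type) [Field k] (n : ℕ) : Type :=
  ↥(reesAlgebra (maxIdeal k n)) ⧸ grIdeal k n

variable (k : Type) [Field k] (n : ℕ) (M : Type) [AddCommGroup M]
  [Module (MvPolynomial (Fin n) k) M]

/-- The Rees module `⊕_i m^i M` of an `S`-module `M`, a module over the Rees algebra. -/
def ReesMod : Type :=
  ↥(((maxIdeal k n).stableFiltration (⊤ : Submodule (MvPolynomial (Fin n) k) M)).submodule)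

instance : AddCommGroup (ReesMod k n M) := by unfold ReesMod; infer_instance
instance : Module ↥(reesAlgebra (maxIdeal k n)) (ReesMod k n M) := by
  unfold ReesMod; infer_instance

/-- The associated graded module `gr_m(M) = ⊕_{i≥0} m^i M/m^{i+1} M`, realized as the
quotient of the Rees module `⊕_i m^i M` by `m·(⊕_i m^i M)`; a `gr_m(S)`-module. -/
def GrMod : Type :=
  ReesMod k n M ⧸
    ((grIdeal k n) • (⊤ : Submodule ↥(reesAlgebra (maxIdeal k n)) (ReesMod k n M)))

instance : AddCommGroup (GrMod k n M) := by unfold GrMod; infer_instance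
instance : Module (GrRing k n) (GrMod k n M) := by unfold GrMod; infer_instance

/-- The degree-one component `m/m²` of `gr_m(S)`: the set of (classes of) the degree-one
elements `s·t` (`s ∈ m`) of the Rees algebra, i.e. the linear forms of `gr_m(S)`. -/
def grDeg1 : Set (GrRing k n) :=
  {g | ∃ s, ∃ hs : s ∈ maxIdeal k n, g = Ideal.Quotient.mk (grIdeal k n)
      ⟨Polynomial.monomial 1 s, reesAlgebra.monomial_mem.mpr (by simpa using hs)⟩}

/-- `N` has a **linear resolution** over `R` with respect to the set `Lin ⊆ R` of linear
forms (the degree-one component of the standard graded algebra `R`): there is a free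
resolution `⋯ → F_{i+1} → F_i → ⋯ → F_0 → N → 0` in which every differential is given by
a matrix with all entries in `Lin`.  For `N` generated in degree `0` this is the usual
notion of a linear resolution (`F_i` generated in degree `i`). -/
def HasLinearResolution (R : Type*) [CommRing R] (Lin : Set R)
    (N : Type*) [AddCommGroup N] [Module R N] : Prop :=
  ∃ (κ : ℕ → Type) (d : ∀ i : ℕ, (κ (i + 1) →₀ R) →ₗ[R] (κ i →₀ R))
    (ε : (κ 0 →₀ R) →ₗ[R] N),
      Function.Surjective ε ∧
      LinearMap.range (d 0) = LinearMap.ker ε ∧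
      (∀ i, LinearMap.range (d (i + 1)) = LinearMap.ker (d i)) ∧
      (∀ i (a : κ (i + 1)) (b : κ i), d i (Finsupp.single a 1) b ∈ Lin)

/-! ### The splitting `S = A[y]`:
`S = k[x_1, …, x_{n-1}, y]` is `MvPolynomial (Fin (nA + 1)) k` with `y` the last
variable and `A = k[x_1, …, x_{n-1}] = MvPolynomial (Fin nA) k`, included in `S` via
`Fin.castSucc`.  The weights are `w : Fin (nA + 1) → ℤ`, with `d = w (Fin.last nA)` the
degree of `y`. -/

/-- The last variable `y` of `S = A[y]`. -/
def yvar (k : Type) [Field k] (nA : ℕ) : MvPolynomial (Fin (nA + 1)) k :=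
  MvPolynomial.X (Fin.last nA)

/-- The `S`-submodule `A_{≥c}·(y^i)` of `S = A[y]` generated by the products `a·y^i`
with `a ∈ A` homogeneous of degree `≥ c`. -/
def AyPow (k : Type) [Field k] (nA : ℕ) (w : Fin (nA + 1) → ℤ) (c : ℤ) (i : ℕ) :
    Submodule (MvPolynomial (Fin (nA + 1)) k) (MvPolynomial (Fin (nA + 1)) k) :=
  Submodule.span (MvPolynomial (Fin (nA + 1)) k)
    ((fun a => MvPolynomial.rename Fin.castSucc a * (yvar k nA) ^ i) ''
      (trunc k nA (fun l => w (Fin.castSucc l)) c : Set (MvPolynomial (Fin nA) k)))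

/-- The filtration `M^{(i)} = M ∩ (y^i)` of the truncation `M = S_{≥e}`. -/
def Mfilt (k : Type) [Field k] (nA : ℕ) (w : Fin (nA + 1) → ℤ) (e : ℤ) (i : ℕ) :
    Submodule (MvPolynomial (Fin (nA + 1)) k) (MvPolynomial (Fin (nA + 1)) k) :=
  trunc k (nA + 1) w e ⊓ Submodule.span _ {yvar k nA ^ i}

/-- `⌈e/d⌉` as a natural number. -/
def ceilDiv (e d : ℤ) : ℕ := (⌈(e : ℚ) / (d : ℚ)⌉).toNat


section AuxTD

open Finsupp in
private lemma weight_mapDomain_castSucc {nA : ℕ} (w : Fin (nA + 1) → ℤ)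
    (u : Fin nA →₀ ℕ) :
    Finsupp.weight w (Finsupp.mapDomain Fin.castSucc u) =
      Finsupp.weight (fun l => w (Fin.castSucc l)) u := by
  classical
  simp only [Finsupp.weight_apply]
  exact Finsupp.sum_mapDomain_index (fun b => zero_smul ℕ _)
    (fun b m n => add_smul m n (w b))

private lemma isWH_rename_castSucc {k : Type} [Field k] {nA : ℕ}
    (w : Fin (nA + 1) → ℤ) {p : MvPolynomial (Fin nA) k} {m : ℤ}
    (hp : MvPolynomial.IsWeightedHomogeneous (fun l => w (Fin.castSucc l)) p m) :
    MvPolynomial.IsWeightedHomogeneous w (MvPolynomial.rename Fin.castSucc p) m := by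
  intro dd hdd
  obtain ⟨u, rfl, hu⟩ := MvPolynomial.coeff_rename_ne_zero _ _ _ hdd
  rw [weight_mapDomain_castSucc]
  exact hp hu

private lemma weight_single_last {nA : ℕ} (w : Fin (nA + 1) → ℤ) (i : ℕ) :
    Finsupp.weight w (Finsupp.single (Fin.last nA) i) = (i : ℤ) * w (Fin.last nA) := by
  simp [Finsupp.weight_apply, Finsupp.sum_single_index]

private lemma isWH_ypow {k : Type} [Field k] {nA : ℕ} (w : Fin (nA + 1) → ℤ) (i : ℕ) :
    MvPolynomial.IsWeightedHomogeneous w ((yvar k nA) ^ i)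
      ((i : ℤ) * w (Fin.last nA)) := by
  rw [yvar, MvPolynomial.X_pow_eq_monomial]
  exact MvPolynomial.isWeightedHomogeneous_monomial _ _ _ (weight_single_last w i)

private lemma mem_trunc_iUnion {k : Type} [Field k] {n : ℕ} {w : Fin n → ℤ} {e m : ℤ}
    {p : MvPolynomial (Fin n) k} (hm : e ≤ m)
    (hp : MvPolynomial.IsWeightedHomogeneous w p m) :
    p ∈ trunc k n w e := by
  apply Submodule.subset_span
  rw [Set.mem_iUnion₂]
  exact ⟨m, hm, hp⟩

private lemma ay_mem_trunc {k : Type} [Field k] {nA : ℕ} (w : Fin (nA + 1) → ℤ)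
    (c e : ℤ) (i : ℕ) (hce : e ≤ c + (i : ℤ) * w (Fin.last nA))
    {p : MvPolynomial (Fin nA) k}
    (hp : p ∈ trunc k nA (fun l => w (Fin.castSucc l)) c) :
    MvPolynomial.rename Fin.castSucc p * (yvar k nA) ^ i ∈ trunc k (nA + 1) w e := by
  induction hp using Submodule.span_induction with
  | mem x hx =>
    rw [Set.mem_iUnion₂] at hx
    obtain ⟨m, hm, hx⟩ := hx
    exact mem_trunc_iUnion (by linarith)
      ((isWH_rename_castSucc w hx).mul (isWH_ypow w i))
  | zero => simp only [map_zero, zero_mul]; exact Submodule.zero_mem _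
  | add x y hx hy ihx ihy =>
    rw [map_add, add_mul]; exact Submodule.add_mem _ ihx ihy
  | smul a x hx ih =>
    rw [smul_eq_mul, map_mul, mul_assoc, ← smul_eq_mul]
    exact Submodule.smul_mem _ _ ih

end AuxTD

/-- For `S = A[y]` with `deg y = d ≥ deg x_i` and `e > 0`, `N = ⌈e/d⌉`, the truncation
decomposes as
`S_{≥e} = A_{≥e} + A_{≥e-d}·(y) + ⋯ + A_{≥e-(N-1)d}·(y^{N-1}) + (y^N)`. -/
theorem truncation_decomposition (k : Type) [Field k] (nA : ℕ)
    (w : Fin (nA + 1) → ℤ) (hw : ∀ i, 0 < w i)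
    (hd : ∀ l : Fin nA, w (Fin.castSucc l) ≤ w (Fin.last nA))
    (e : ℤ) (he : 0 < e) :
    trunc k (nA + 1) w e =
      (⨆ i ∈ Finset.range (ceilDiv e (w (Fin.last nA))),
        AyPow k nA w (e - w (Fin.last nA) * i) i) ⊔
      Submodule.span _ {yvar k nA ^ (ceilDiv e (w (Fin.last nA)))} := by
  classical
  set d := w (Fin.last nA) with hddef
  have hd0 : (0 : ℤ) < d := hw _
  set N := ceilDiv e d with hNdef
  -- `(N : ℤ) = ⌈e/d⌉` and `e ≤ N * d`
  have hceil : ((N : ℤ) : ℚ) = (⌈(e : ℚ) / (d : ℚ)⌉ : ℚ) := by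
    have h3 : (0 : ℤ) ≤ ⌈(e : ℚ) / (d : ℚ)⌉ :=
      Int.ceil_nonneg (by positivity)
    rw [hNdef, ceilDiv, Int.toNat_of_nonneg h3]
  have hNe : e ≤ (N : ℤ) * d := by
    have h1 : (0 : ℚ) < (d : ℚ) := by exact_mod_cast hd0
    have h2 : (e : ℚ) ≤ (⌈(e : ℚ) / (d : ℚ)⌉ : ℚ) * (d : ℚ) :=
      (div_le_iff₀ h1).mp (Int.le_ceil _)
    rw [← hceil] at h2
    exact_mod_cast h2
  apply le_antisymm
  · -- trunc ≤ RHS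
    apply Submodule.span_le.mpr
    intro p hp
    rw [Set.mem_iUnion₂] at hp
    obtain ⟨m, hm, hhom⟩ := hp
    rw [SetLike.mem_coe] at hhom
    rw [MvPolynomial.mem_weightedHomogeneousSubmodule] at hhom
    rw [SetLike.mem_coe, p.as_sum]
    apply Submodule.sum_mem
    intro α hα
    have hc : MvPolynomial.coeff α p ≠ 0 := MvPolynomial.mem_support_iff.mp hα
    have hmα : Finsupp.weight w α = m := hhom hc
    by_cases hj : N ≤ α (Fin.last nA)
    · -- divisible by y^N
      apply Submodule.mem_sup_right
      rw [Submodule.mem_span_singleton]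
      refine ⟨MvPolynomial.monomial (α - Finsupp.single (Fin.last nA) N)
        (MvPolynomial.coeff α p), ?_⟩
      rw [smul_eq_mul, yvar, MvPolynomial.X_pow_eq_monomial,
        MvPolynomial.monomial_mul, mul_one,
        tsub_add_cancel_of_le (Finsupp.single_le_iff.mpr hj)]
    · push_neg at hj
      set j := α (Fin.last nA) with hjdef
      set α' : Fin nA →₀ ℕ :=
        Finsupp.comapDomain Fin.castSucc α
          ((Fin.castSucc_injective nA).injOn) with hα'def
      have hdecomp : Finsupp.mapDomain Fin.castSucc α' +
          Finsupp.single (Fin.last nA) j = α := by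
        ext i
        induction i using Fin.lastCases with
        | last =>
          rw [Finsupp.add_apply,
            Finsupp.mapDomain_notin_range _ _ (by
              rintro ⟨x, hx⟩
              exact (Fin.castSucc_lt_last x).ne hx),
            Finsupp.single_eq_same, zero_add]
        | cast i =>
          rw [Finsupp.add_apply,
            Finsupp.mapDomain_apply (Fin.castSucc_injective nA),
            Finsupp.single_eq_of_ne (Fin.castSucc_lt_last i).ne, add_zero,
            hα'def, Finsupp.comapDomain_apply]
      have hwα' : Finsupp.weight (fun l => w (Fin.castSucc l)) α'
          = m - (j : ℤ) * d := by
        have := congrArg (Finsupp.weight w) hdecomp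
        rw [map_add, weight_mapDomain_castSucc, weight_single_last, hmα] at this
        linarith
      apply Submodule.mem_sup_left
      have hjN : j ∈ Finset.range N := Finset.mem_range.mpr hj
      refine le_iSup₂ (f := fun i (_ : i ∈ Finset.range N) =>
        AyPow k nA w (e - d * i) i) j hjN ?_
      simp only [AyPow]
      apply Submodule.subset_span
      refine ⟨MvPolynomial.monomial α' (MvPolynomial.coeff α p), ?_, ?_⟩
      · apply mem_trunc_iUnion (m := m - (j : ℤ) * d) (by linarith)
        exact MvPolynomial.isWeightedHomogeneous_monomial _ _ _ hwα'
      · show MvPolynomial.rename Fin.castSucc (MvPolynomial.monomial α'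
            (MvPolynomial.coeff α p)) * yvar k nA ^ j = MvPolynomial.monomial α
            (MvPolynomial.coeff α p)
        rw [MvPolynomial.rename_monomial, yvar, MvPolynomial.X_pow_eq_monomial,
          MvPolynomial.monomial_mul, mul_one, hdecomp]
  · -- RHS ≤ trunc
    apply sup_le
    · apply iSup₂_le
      intro i hi
      simp only [AyPow]
      apply Submodule.span_le.mpr
      rintro _ ⟨a, ha, rfl⟩
      exact ay_mem_trunc w _ e i (by linarith [mul_comm d (i : ℤ)]) ha
    · apply Submodule.span_le.mpr
      intro x hx
      rw [Set.mem_singleton_iff] at hx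
      subst hx
      exact mem_trunc_iUnion (by linarith [mul_comm (N : ℤ) d]) (isWH_ypow w N)
end
end

section
/- Let S = A[y] where A = k[x_1,…,x_{n-1}] is a positively Z-graded polynomial ring and deg(y) = d satisfies d ≥ deg(x_i) for all i. Fix e > 0, set M = S_{≥e}, M^{(i)} = M ∩ (y^i), and N = ⌈e/d⌉. Then for each 0 ≤ i < N there is a short exact sequence of S-modules 0 → M^{(i+1)} → M^{(i)} → A_{≥e−di}·S/(y) → 0, where the surjection is induced by the composition M^{(i)} ↪ (y^i) ↠ (y^i)/(y^{i+1}); in particular M^{(i)}/M^{(i+1)} ≅ A_{≥e−di}·S/(y) ≅ A_{≥e−di} as A-modules. -/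
/-!
Background setup.  `MvPolynomial (Fin n) k` is the polynomial ring `S = k[x_1, …, x_n]`
over the field `k`, graded (possibly nonstandardly) by weights `w : Fin n → ℤ` with
`0 < w i`, with graded maximal ideal `m = maxIdeal k n = (x_1, …, x_n)`.

* `trunc k n w e` is the truncation `S_{≥e} = ⊕_{i ≥ e} S_i`, an `S`-submodule of `S`
  (realized as the `S`-span of the weighted-homogeneous elements of weighted degree `≥ e`;
  for positive weights this span is exactly `⊕_{i ≥ e} S_i`).
* `GrRing k n` is the associated graded ring `gr_m(S) = ⊕_{i≥0} m^i/m^{i+1}`, realized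
  as the quotient `Rees(m) ⧸ m·Rees(m)` of the Rees algebra of `m`; it is a standard
  graded polynomial ring over `k = S/m`.
* `GrMod k n M` is the associated graded module `gr_m(M) = ⊕_{i≥0} m^i M/m^{i+1} M` of an
  `S`-module `M`, realized as the quotient of the Rees module `⊕_i m^i M` by
  `m·(⊕_i m^i M)`; it is a module over `gr_m(S) = GrRing k n`.
* `grDeg1 k n` is the degree-one component `m/m²` of `gr_m(S)`, i.e. the set of linear
  forms of the standard graded ring `gr_m(S)`.
* `HasLinearResolution R Lin N` says that `N` admits a free resolution
  `⋯ → F_{i+1} → F_i → ⋯ → F_0 → N → 0` in which every differential is given by a matrix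
  all of whose entries lie in the set `Lin` of linear forms.  For a module generated in
  degree `0` over a standard graded `k`-algebra `R` (with `Lin = R_1`) this is the usual
  notion of a linear resolution: a graded free resolution `F_•` with `F_i` generated in
  degree `i`.
-/

set_option synthInstance.maxHeartbeats 1000000
set_option maxHeartbeats 1000000

noncomputable section
open MvPolynomial

variable (k : Type) [Field k] (n : ℕ) (M : Type) [AddCommGroup M]
  [Module (MvPolynomial (Fin n) k) M]

section PredSub

variable (k : Type) [Field k] (n : ℕ)

/-- The submodule of polynomials all of whose monomials satisfy a predicate that is
stable under adding further monomials. -/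
def predSub (P : (Fin n →₀ ℕ) → Prop) (hP : ∀ m m', P m → P (m + m')) :
    Submodule (MvPolynomial (Fin n) k) (MvPolynomial (Fin n) k) where
  carrier := {p | ∀ m ∈ p.support, P m}
  zero_mem' := by simp
  add_mem' := by
    intro a b ha hb m hm
    classical
    rcases Finset.mem_union.mp (MvPolynomial.support_add hm) with h | h
    · exact ha m h
    · exact hb m h
  smul_mem' := by
    intro c p hp m hm
    classical
    rw [smul_eq_mul] at hm
    obtain ⟨a, _, b, hb, rfl⟩ := Finset.mem_add.mp (MvPolynomial.support_mul c p hm)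
    rw [add_comm]
    exact hP b a (hp b hb)

theorem mem_predSub {P : (Fin n →₀ ℕ) → Prop} {hP : ∀ m m', P m → P (m + m')}
    {p : MvPolynomial (Fin n) k} : p ∈ predSub k n P hP ↔ ∀ m ∈ p.support, P m := Iff.rfl

end PredSub

section Trunc

variable {k : Type} [Field k] {n : ℕ} {w : Fin n → ℤ} {e : ℤ}

theorem weight_nonneg (hw : ∀ j, 0 ≤ w j) (m : Fin n →₀ ℕ) :
    0 ≤ Finsupp.weight w m := by
  rw [Finsupp.weight_apply, Finsupp.sum]
  exact Finset.sum_nonneg fun j _ => nsmul_nonneg (hw j) _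

theorem hP_trunc (hw : ∀ j, 0 ≤ w j) :
    ∀ m m' : Fin n →₀ ℕ, e ≤ Finsupp.weight w m → e ≤ Finsupp.weight w (m + m') := by
  intro m m' h
  rw [map_add]
  exact le_add_of_le_of_nonneg h (weight_nonneg hw m')

theorem monomial_mem_trunc (hc : e ≤ Finsupp.weight w m) (r : k) :
    MvPolynomial.monomial m r ∈ trunc k n w e := by
  apply Submodule.subset_span
  refine Set.mem_iUnion.mpr ⟨Finsupp.weight w m, Set.mem_iUnion.mpr ⟨hc, ?_⟩⟩
  exact isWeightedHomogeneous_monomial w m r rfl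

theorem mem_trunc_iff (hw : ∀ j, 0 ≤ w j) {p : MvPolynomial (Fin n) k} :
    p ∈ trunc k n w e ↔ ∀ m ∈ p.support, e ≤ Finsupp.weight w m := by
  constructor
  · intro hp
    refine (mem_predSub k n (hP := hP_trunc hw)).mp ?_
    refine Submodule.span_le.mpr ?_ hp
    intro x hx
    obtain ⟨d, hd⟩ := Set.mem_iUnion.mp hx
    obtain ⟨hed, hx⟩ := Set.mem_iUnion.mp hd
    intro m hm
    have := (SetLike.mem_coe.mp hx) (MvPolynomial.mem_support_iff.mp hm)
    rw [this]; exact hed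
  · intro h
    have := Submodule.sum_mem (trunc k n w e) (t := p.support)
      (f := fun m => MvPolynomial.monomial m (MvPolynomial.coeff m p))
      (fun m hm => monomial_mem_trunc (h m hm) _)
    rwa [← p.as_sum] at this

end Trunc

section Ypow

variable {k : Type} [Field k] {nA : ℕ}

theorem monomial_mem_spanYpow {i : ℕ} {m : Fin (nA + 1) →₀ ℕ}
    (h : i ≤ m (Fin.last nA)) (r : k) :
    MvPolynomial.monomial m r ∈
      Submodule.span (MvPolynomial (Fin (nA + 1)) k) {yvar k nA ^ i} := by
  refine Submodule.mem_span_singleton.mpr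
    ⟨MvPolynomial.monomial (m - Finsupp.single (Fin.last nA) i) r, ?_⟩
  rw [smul_eq_mul, yvar, MvPolynomial.X_pow_eq_monomial, MvPolynomial.monomial_mul, mul_one,
    tsub_add_cancel_of_le (Finsupp.single_le_iff.mpr h)]

theorem mem_spanYpow_iff {i : ℕ} {p : MvPolynomial (Fin (nA + 1)) k} :
    p ∈ Submodule.span (MvPolynomial (Fin (nA + 1)) k) {yvar k nA ^ i} ↔
      ∀ m ∈ p.support, i ≤ m (Fin.last nA) := by
  constructor
  · intro hp
    refine (mem_predSub k (nA + 1)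
      (hP := fun m m' (h : i ≤ m (Fin.last nA)) =>
        (h.trans (by simp : m (Fin.last nA) ≤ (m + m') (Fin.last nA)) :
          i ≤ (m + m') (Fin.last nA)))).mp ?_
    refine Submodule.span_le.mpr ?_ hp
    intro x hx
    rw [Set.mem_singleton_iff] at hx
    subst hx
    intro m hm
    rw [yvar, MvPolynomial.support_X_pow] at hm
    rw [Finset.mem_singleton] at hm
    subst hm
    simp
  · intro h
    have := Submodule.sum_mem
      (Submodule.span (MvPolynomial (Fin (nA + 1)) k) {yvar k nA ^ i}) (t := p.support)
      (f := fun m => MvPolynomial.monomial m (MvPolynomial.coeff m p))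
      (fun m hm => monomial_mem_spanYpow (h m hm) _)
    rwa [← p.as_sum] at this

end Ypow

section Pull

variable {k : Type} [Field k] {nA : ℕ}

def pull (nA : ℕ) (m : Fin (nA + 1) →₀ ℕ) : Fin nA →₀ ℕ :=
  Finsupp.comapDomain Fin.castSucc m ((Fin.castSucc_injective nA).injOn)

@[simp] theorem pull_apply (m : Fin (nA + 1) →₀ ℕ) (l : Fin nA) :
    pull nA m l = m (Fin.castSucc l) := rfl

theorem last_notMem_range : Fin.last nA ∉ Set.range (Fin.castSucc : Fin nA → Fin (nA + 1)) := by
  rintro ⟨l, hl⟩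
  exact absurd hl (Fin.castSucc_lt_last l).ne

theorem pull_add (m m' : Fin (nA + 1) →₀ ℕ) : pull nA (m + m') = pull nA m + pull nA m' := by
  ext l; simp

theorem pull_decomp (m : Fin (nA + 1) →₀ ℕ) :
    Finsupp.mapDomain Fin.castSucc (pull nA m) +
      Finsupp.single (Fin.last nA) (m (Fin.last nA)) = m := by
  ext j
  induction j using Fin.lastCases with
  | last =>
      simp [Finsupp.mapDomain_notin_range _ _ last_notMem_range]
  | cast l =>
      simp [Finsupp.mapDomain_apply (Fin.castSucc_injective nA),
        Finsupp.single_apply, (Fin.castSucc_lt_last l).ne']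

theorem pull_mapDomain (u : Fin nA →₀ ℕ) :
    pull nA (Finsupp.mapDomain Fin.castSucc u) = u := by
  ext l; simp [Finsupp.mapDomain_apply (Fin.castSucc_injective nA)]

theorem pull_single_last (j : ℕ) : pull nA (Finsupp.single (Fin.last nA) j) = 0 := by
  ext l; simp [Finsupp.single_apply, (Fin.castSucc_lt_last l).ne']

theorem weight_single (w : Fin (nA + 1) → ℤ) (j : Fin (nA + 1)) (a : ℕ) :
    Finsupp.weight w (Finsupp.single j a) = a • w j := by
  rw [Finsupp.weight_apply, Finsupp.sum_single_index]
  exact zero_smul _ _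

theorem weight_mapDomain (w : Fin (nA + 1) → ℤ) (u : Fin nA →₀ ℕ) :
    Finsupp.weight w (Finsupp.mapDomain Fin.castSucc u) =
      Finsupp.weight (fun l => w (Fin.castSucc l)) u := by
  rw [Finsupp.weight_apply, Finsupp.weight_apply]
  exact Finsupp.sum_mapDomain_index (fun b => zero_smul _ _) (fun b m₁ m₂ => add_smul _ _ _)

theorem weight_split (w : Fin (nA + 1) → ℤ) (m : Fin (nA + 1) →₀ ℕ) :
    Finsupp.weight w m = Finsupp.weight (fun l => w (Fin.castSucc l)) (pull nA m) +
      (m (Fin.last nA)) • w (Fin.last nA) := by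
  conv_lhs => rw [← pull_decomp m]
  rw [map_add, weight_mapDomain, weight_single]

end Pull

section Ay

variable {k : Type} [Field k] {nA : ℕ} {w : Fin (nA + 1) → ℤ} {c : ℤ} {i : ℕ}

/-- degree in the `A`-variables -/
abbrev DA (w : Fin (nA + 1) → ℤ) (m : Fin (nA + 1) →₀ ℕ) : ℤ :=
  Finsupp.weight (fun l => w (Fin.castSucc l)) (pull nA m)

theorem hP_Ay (hw : ∀ j, 0 ≤ w j) :
    ∀ m m' : Fin (nA + 1) →₀ ℕ,
      (i ≤ m (Fin.last nA) ∧ c ≤ DA w m) →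
      (i ≤ (m + m') (Fin.last nA) ∧ c ≤ DA w (m + m')) := by
  intro m m' ⟨h1, h2⟩
  constructor
  · simp only [Finsupp.add_apply]
    omega
  · rw [DA, pull_add, map_add]
    refine le_add_of_le_of_nonneg h2 (weight_nonneg (fun l => hw _) _)

theorem monomial_mem_AyPow {m : Fin (nA + 1) →₀ ℕ} (hi : i ≤ m (Fin.last nA))
    (hc : c ≤ DA w m) (r : k) : MvPolynomial.monomial m r ∈ AyPow k nA w c i := by
  have htr : MvPolynomial.monomial (pull nA m) r ∈
      trunc k nA (fun l => w (Fin.castSucc l)) c := monomial_mem_trunc hc r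
  have hgen : MvPolynomial.rename Fin.castSucc (MvPolynomial.monomial (pull nA m) r) *
      yvar k nA ^ i ∈ AyPow k nA w c i :=
    Submodule.subset_span ⟨MvPolynomial.monomial (pull nA m) r, htr, rfl⟩
  have := Submodule.smul_mem (AyPow k nA w c i)
    (MvPolynomial.monomial (Finsupp.single (Fin.last nA) (m (Fin.last nA) - i)) (1 : k)) hgen
  rwa [smul_eq_mul, MvPolynomial.rename_monomial, yvar, MvPolynomial.X_pow_eq_monomial,
    MvPolynomial.monomial_mul, MvPolynomial.monomial_mul, one_mul, mul_one,
    show Finsupp.single (Fin.last nA) (m (Fin.last nA) - i) +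
        (Finsupp.mapDomain Fin.castSucc (pull nA m) + Finsupp.single (Fin.last nA) i) = m by
      rw [add_comm (Finsupp.single (Fin.last nA) (m (Fin.last nA) - i)), add_assoc,
        ← Finsupp.single_add, Nat.add_sub_cancel' hi, pull_decomp]] at this

theorem mem_AyPow_iff (hw : ∀ j, 0 ≤ w j) {p : MvPolynomial (Fin (nA + 1)) k} :
    p ∈ AyPow k nA w c i ↔
      ∀ m ∈ p.support, i ≤ m (Fin.last nA) ∧ c ≤ DA w m := by
  constructor
  · intro hp
    refine (mem_predSub k (nA + 1) (hP := hP_Ay hw)).mp ?_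
    refine Submodule.span_le.mpr ?_ hp
    rintro x ⟨a, ha, rfl⟩
    intro m hm
    classical
    have hsub := MvPolynomial.support_mul (MvPolynomial.rename Fin.castSucc a) (yvar k nA ^ i) hm
    obtain ⟨u', hu', v, hv, rfl⟩ := Finset.mem_add.mp hsub
    rw [MvPolynomial.support_rename_of_injective (Fin.castSucc_injective nA)] at hu'
    obtain ⟨u, hu, rfl⟩ := Finset.mem_image.mp hu'
    rw [yvar, MvPolynomial.support_X_pow, Finset.mem_singleton] at hv
    subst hv
    have hlast : (Finsupp.mapDomain Fin.castSucc u + Finsupp.single (Fin.last nA) i)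
        (Fin.last nA) = i := by
      simp [Finsupp.mapDomain_notin_range _ _ last_notMem_range]
    constructor
    · omega
    · have hpull : pull nA (Finsupp.mapDomain Fin.castSucc u +
          Finsupp.single (Fin.last nA) i) = u := by
        rw [pull_add, pull_mapDomain, pull_single_last, add_zero]
      rw [DA, hpull]
      exact (mem_trunc_iff (fun l => hw _)).mp ha u hu
  · intro h
    have := Submodule.sum_mem (AyPow k nA w c i) (t := p.support)
      (f := fun m => MvPolynomial.monomial m (MvPolynomial.coeff m p))
      (fun m hm => monomial_mem_AyPow (h m hm).1 (h m hm).2 _)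
    rwa [← p.as_sum] at this

end Ay

section Main

variable {k : Type} [Field k] {nA : ℕ} {w : Fin (nA + 1) → ℤ} {e : ℤ} {i : ℕ}

theorem AyPow_le_Mfilt (hw : ∀ j, 0 ≤ w j) :
    AyPow k nA w (e - w (Fin.last nA) * i) i ≤ Mfilt k nA w e i := by
  intro p hp
  have h := (mem_AyPow_iff hw).mp hp
  refine Submodule.mem_inf.mpr ⟨?_, mem_spanYpow_iff.mpr fun m hm => (h m hm).1⟩
  refine (mem_trunc_iff hw).mpr fun m hm => ?_
  obtain ⟨h1, h2⟩ := h m hm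
  rw [weight_split w m]
  have hmul : (i : ℤ) * w (Fin.last nA) ≤ (m (Fin.last nA) : ℤ) * w (Fin.last nA) :=
    mul_le_mul_of_nonneg_right (by exact_mod_cast h1) (hw _)
  have : (m (Fin.last nA)) • w (Fin.last nA) = (m (Fin.last nA) : ℤ) * w (Fin.last nA) := by
    simp [nsmul_eq_mul]
  rw [this]
  linarith

theorem Mfilt_le_sup (hw : ∀ j, 0 ≤ w j) :
    Mfilt k nA w e i ≤ AyPow k nA w (e - w (Fin.last nA) * i) i ⊔
      Submodule.span (MvPolynomial (Fin (nA + 1)) k) {yvar k nA ^ (i + 1)} := by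
  intro p hp
  obtain ⟨h1, h2⟩ := Submodule.mem_inf.mp hp
  have h1' := (mem_trunc_iff hw).mp h1
  have h2' := mem_spanYpow_iff.mp h2
  have : ∀ m ∈ p.support, MvPolynomial.monomial m (MvPolynomial.coeff m p) ∈
      AyPow k nA w (e - w (Fin.last nA) * i) i ⊔
        Submodule.span (MvPolynomial (Fin (nA + 1)) k) {yvar k nA ^ (i + 1)} := by
    intro m hm
    by_cases hcase : m (Fin.last nA) = i
    · refine Submodule.mem_sup_left (monomial_mem_AyPow (le_of_eq hcase.symm) ?_ _)
      have hs := weight_split w m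
      rw [hcase] at hs
      have : (i : ℤ) • w (Fin.last nA) = (i : ℤ) * w (Fin.last nA) := by simp
      have h3 := h1' m hm
      rw [hs] at h3
      simp only [nsmul_eq_mul] at h3
      linarith
    · exact Submodule.mem_sup_right (monomial_mem_spanYpow
        (by have := h2' m hm; omega) _)
  have hsum := Submodule.sum_mem _ (t := p.support) this
  rwa [← p.as_sum] at hsum

end Main

/-- For `0 ≤ i < N = ⌈e/d⌉` there is a short exact sequence of `S`-modules
`0 → M^{(i+1)} → M^{(i)} → A_{≥e-di}·S/(y) → 0`, where the surjection is (induced by)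
`ψ : M^{(i)} ↪ (y^i) ↠ (y^i)/(y^{i+1})`, realized below as the composite
`ᾱ : M^{(i)} → S → S/(y^{i+1})`.  Precisely: `ker ᾱ = M^{(i+1)}`,
`range ᾱ = (A_{≥e-di}·(y^i) + (y^{i+1}))/(y^{i+1})`, and consequently
`M^{(i)}/M^{(i+1)} ≅ A_{≥e-di}·S/(y)` as `S`-modules. -/
theorem filtration_quotient (k : Type) [Field k] (nA : ℕ)
    (w : Fin (nA + 1) → ℤ) (hw : ∀ i, 0 < w i)
    (hd : ∀ l : Fin nA, w (Fin.castSucc l) ≤ w (Fin.last nA))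
    (e : ℤ) (he : 0 < e) (i : ℕ) (hi : i < ceilDiv e (w (Fin.last nA))) :
    LinearMap.ker ((Submodule.mkQ
        (Submodule.span (MvPolynomial (Fin (nA + 1)) k) {yvar k nA ^ (i + 1)})).comp
        (Mfilt k nA w e i).subtype) =
      Submodule.comap (Mfilt k nA w e i).subtype (Mfilt k nA w e (i + 1)) ∧
    LinearMap.range ((Submodule.mkQ
        (Submodule.span (MvPolynomial (Fin (nA + 1)) k) {yvar k nA ^ (i + 1)})).comp
        (Mfilt k nA w e i).subtype) =
      Submodule.map (Submodule.mkQ _)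
        (AyPow k nA w (e - w (Fin.last nA) * i) i) ∧
    Nonempty ((↥(Mfilt k nA w e i) ⧸
        Submodule.comap (Mfilt k nA w e i).subtype (Mfilt k nA w e (i + 1)))
      ≃ₗ[MvPolynomial (Fin (nA + 1)) k]
        ↥(Submodule.map
          (Submodule.mkQ (Submodule.span (MvPolynomial (Fin (nA + 1)) k) {yvar k nA}))
          (AyPow k nA w (e - w (Fin.last nA) * i) 0))) := by
    classical
  have hw0 : ∀ j, 0 ≤ w j := fun j => (hw j).le
  set S := MvPolynomial (Fin (nA + 1)) k
  -- Part 1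
  have hker : LinearMap.ker ((Submodule.mkQ
      (Submodule.span S {yvar k nA ^ (i + 1)})).comp (Mfilt k nA w e i).subtype) =
      Submodule.comap (Mfilt k nA w e i).subtype (Mfilt k nA w e (i + 1)) := by
    rw [LinearMap.ker_comp, Submodule.ker_mkQ]
    ext x
    simp only [Submodule.mem_comap, Submodule.coe_subtype]
    exact ⟨fun h => Submodule.mem_inf.mpr ⟨(Submodule.mem_inf.mp x.2).1, h⟩,
      fun h => (Submodule.mem_inf.mp h).2⟩
  refine ⟨hker, ?_, ?_⟩
  -- Part 2
  · rw [LinearMap.range_comp, Submodule.range_subtype]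
    have hbot : Submodule.map (Submodule.mkQ (Submodule.span S {yvar k nA ^ (i + 1)}))
        (Submodule.span S {yvar k nA ^ (i + 1)}) = ⊥ := by
      rw [eq_bot_iff, Submodule.map_le_iff_le_comap]
      intro x hx
      simp only [Submodule.mem_comap, Submodule.mem_bot, Submodule.mkQ_apply,
        Submodule.Quotient.mk_eq_zero]
      exact hx
    apply le_antisymm
    · calc Submodule.map (Submodule.mkQ (Submodule.span S {yvar k nA ^ (i + 1)}))
            (Mfilt k nA w e i)
          ≤ Submodule.map (Submodule.mkQ (Submodule.span S {yvar k nA ^ (i + 1)}))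
            (AyPow k nA w (e - w (Fin.last nA) * i) i ⊔
              Submodule.span S {yvar k nA ^ (i + 1)}) :=
            Submodule.map_mono (Mfilt_le_sup hw0)
        _ = Submodule.map (Submodule.mkQ (Submodule.span S {yvar k nA ^ (i + 1)}))
              (AyPow k nA w (e - w (Fin.last nA) * i) i) ⊔
            Submodule.map (Submodule.mkQ (Submodule.span S {yvar k nA ^ (i + 1)}))
              (Submodule.span S {yvar k nA ^ (i + 1)}) := Submodule.map_sup _ _ _
        _ = _ := by rw [hbot, sup_bot_eq]
    · exact Submodule.map_mono (AyPow_le_Mfilt hw0)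
  -- Part 3
  · have hrange : LinearMap.range ((Submodule.mkQ
        (Submodule.span S {yvar k nA ^ (i + 1)})).comp (Mfilt k nA w e i).subtype) =
        Submodule.map (Submodule.mkQ (Submodule.span S {yvar k nA ^ (i + 1)}))
          (AyPow k nA w (e - w (Fin.last nA) * i) i) := by
      rw [LinearMap.range_comp, Submodule.range_subtype]
      have hbot : Submodule.map (Submodule.mkQ (Submodule.span S {yvar k nA ^ (i + 1)}))
          (Submodule.span S {yvar k nA ^ (i + 1)}) = ⊥ := by
        rw [eq_bot_iff, Submodule.map_le_iff_le_comap]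
        intro x hx
        simp only [Submodule.mem_comap, Submodule.mem_bot, Submodule.mkQ_apply,
          Submodule.Quotient.mk_eq_zero]
        exact hx
      apply le_antisymm
      · calc Submodule.map (Submodule.mkQ (Submodule.span S {yvar k nA ^ (i + 1)}))
              (Mfilt k nA w e i)
            ≤ Submodule.map (Submodule.mkQ (Submodule.span S {yvar k nA ^ (i + 1)}))
              (AyPow k nA w (e - w (Fin.last nA) * i) i ⊔
                Submodule.span S {yvar k nA ^ (i + 1)}) :=
              Submodule.map_mono (Mfilt_le_sup hw0)
          _ = Submodule.map (Submodule.mkQ (Submodule.span S {yvar k nA ^ (i + 1)}))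
                (AyPow k nA w (e - w (Fin.last nA) * i) i) ⊔
              Submodule.map (Submodule.mkQ (Submodule.span S {yvar k nA ^ (i + 1)}))
                (Submodule.span S {yvar k nA ^ (i + 1)}) := Submodule.map_sup _ _ _
          _ = _ := by rw [hbot, sup_bot_eq]
      · exact Submodule.map_mono (AyPow_le_Mfilt hw0)
    set y := yvar k nA with hy
    set q1 := Submodule.span S {y} with hq1
    set qi := Submodule.span S {y ^ (i + 1)} with hqi
    set f : S →ₗ[S] S := LinearMap.lsmul S S (y ^ i) with hf
    have hle : q1 ≤ LinearMap.ker ((Submodule.mkQ qi).comp f) := by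
      rw [hq1, Submodule.span_le]
      intro x hx
      rw [Set.mem_singleton_iff] at hx; subst hx
      simp only [SetLike.mem_coe, LinearMap.mem_ker, LinearMap.comp_apply,
        LinearMap.lsmul_apply, smul_eq_mul, Submodule.mkQ_apply,
        Submodule.Quotient.mk_eq_zero, hf]
      show y ^ i * y ∈ qi
      rw [← pow_succ]
      exact Submodule.mem_span_singleton_self _
    set φ : (S ⧸ q1) →ₗ[S] (S ⧸ qi) :=
      Submodule.liftQ q1 ((Submodule.mkQ qi).comp f) hle with hφ
    have hφinj : Function.Injective φ := by
      rw [← LinearMap.ker_eq_bot]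
      apply Submodule.ker_liftQ_eq_bot
      intro x hx
      simp only [LinearMap.mem_ker, LinearMap.comp_apply, LinearMap.lsmul_apply,
        smul_eq_mul, Submodule.mkQ_apply, Submodule.Quotient.mk_eq_zero, hf] at hx
      obtain ⟨a, ha⟩ := Submodule.mem_span_singleton.mp hx
      refine Submodule.mem_span_singleton.mpr ⟨a, ?_⟩
      have hyne : (y : S) ^ i ≠ 0 := pow_ne_zero _ (MvPolynomial.X_ne_zero _)
      apply mul_left_cancel₀ hyne
      rw [smul_eq_mul] at ha ⊢
      calc y ^ i * (a * y) = a * y ^ (i + 1) := by ring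
        _ = y ^ i * x := ha
    have hmap : Submodule.map f (AyPow k nA w (e - w (Fin.last nA) * i) 0) =
        AyPow k nA w (e - w (Fin.last nA) * i) i := by
      unfold AyPow
      rw [Submodule.map_span, ← Set.image_comp]
      congr 1
      apply Set.image_congr
      intro a _
      simp only [Function.comp_apply, LinearMap.lsmul_apply, smul_eq_mul, pow_zero,
        mul_one, hf, hy]
      ring
    have heq : Submodule.map φ (Submodule.map (Submodule.mkQ q1)
        (AyPow k nA w (e - w (Fin.last nA) * i) 0)) =
        Submodule.map (Submodule.mkQ qi) (AyPow k nA w (e - w (Fin.last nA) * i) i) := by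
      rw [← Submodule.map_comp, hφ, Submodule.liftQ_mkQ, Submodule.map_comp, hmap]
    have E0 : (↥(Mfilt k nA w e i) ⧸
        Submodule.comap (Mfilt k nA w e i).subtype (Mfilt k nA w e (i + 1)))
        ≃ₗ[S] (↥(Mfilt k nA w e i) ⧸ LinearMap.ker ((Submodule.mkQ qi).comp
          (Mfilt k nA w e i).subtype)) :=
      Submodule.quotEquivOfEq _ _ hker.symm
    have E1 := LinearMap.quotKerEquivRange
      ((Submodule.mkQ qi).comp (Mfilt k nA w e i).subtype)
    have E2 : ↥(LinearMap.range ((Submodule.mkQ qi).comp (Mfilt k nA w e i).subtype))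
        ≃ₗ[S] ↥(Submodule.map (Submodule.mkQ qi)
          (AyPow k nA w (e - w (Fin.last nA) * i) i)) :=
      LinearEquiv.ofEq _ _ hrange
    have E3 := Submodule.equivMapOfInjective φ hφinj
      (Submodule.map (Submodule.mkQ q1) (AyPow k nA w (e - w (Fin.last nA) * i) 0))
    have E4 : ↥(Submodule.map φ (Submodule.map (Submodule.mkQ q1)
        (AyPow k nA w (e - w (Fin.last nA) * i) 0)))
        ≃ₗ[S] ↥(Submodule.map (Submodule.mkQ qi)
          (AyPow k nA w (e - w (Fin.last nA) * i) i)) :=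
      LinearEquiv.ofEq _ _ heq
    exact ⟨((E0.trans E1).trans E2).trans (E3.trans E4).symm⟩
end
end

section
/- Let S = A[y] where A = k[x_1,…,x_{n-1}] is a positively Z-graded polynomial ring, deg(y) = d ≥ deg(x_i) for all i, and m is the maximal ideal of S. Fix e > 0, set M = S_{≥e}, M^{(i)} = M ∩ (y^i), N = ⌈e/d⌉, and A^{(i)} = A_{≥e−di}·S/(y). For 0 ≤ i < N let α_i : M^{(i)} → A^{(i)} be the canonical surjection with kernel M^{(i+1)}. Then for every j ≥ 0 the induced sequence 0 → m^j M^{(i+1)} → m^j M^{(i)} → m^j A^{(i)} → 0 is exact; equivalently, the kernel of the surjection m^j M^{(i)} → m^j A^{(i)} induced by α_i equals m^j M^{(i+1)} (i.e., m^j·ker(α_i)). -/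
/-!
Background setup.  `MvPolynomial (Fin n) k` is the polynomial ring `S = k[x_1, …, x_n]`
over the field `k`, graded (possibly nonstandardly) by weights `w : Fin n → ℤ` with
`0 < w i`, with graded maximal ideal `m = maxIdeal k n = (x_1, …, x_n)`.

* `trunc k n w e` is the truncation `S_{≥e} = ⊕_{i ≥ e} S_i`, an `S`-submodule of `S`
  (realized as the `S`-span of the weighted-homogeneous elements of weighted degree `≥ e`;
  for positive weights this span is exactly `⊕_{i ≥ e} S_i`).
* `GrRing k n` is the associated graded ring `gr_m(S) = ⊕_{i≥0} m^i/m^{i+1}`, realized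
  as the quotient `Rees(m) ⧸ m·Rees(m)` of the Rees algebra of `m`; it is a standard
  graded polynomial ring over `k = S/m`.
* `GrMod k n M` is the associated graded module `gr_m(M) = ⊕_{i≥0} m^i M/m^{i+1} M` of an
  `S`-module `M`, realized as the quotient of the Rees module `⊕_i m^i M` by
  `m·(⊕_i m^i M)`; it is a module over `gr_m(S) = GrRing k n`.
* `grDeg1 k n` is the degree-one component `m/m²` of `gr_m(S)`, i.e. the set of linear
  forms of the standard graded ring `gr_m(S)`.
* `HasLinearResolution R Lin N` says that `N` admits a free resolution
  `⋯ → F_{i+1} → F_i → ⋯ → F_0 → N → 0` in which every differential is given by a matrix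
  all of whose entries lie in the set `Lin` of linear forms.  For a module generated in
  degree `0` over a standard graded `k`-algebra `R` (with `Lin = R_1`) this is the usual
  notion of a linear resolution: a graded free resolution `F_•` with `F_i` generated in
  degree `i`.
-/

set_option synthInstance.maxHeartbeats 1000000
set_option maxHeartbeats 1000000

noncomputable section
open MvPolynomial

variable (k : Type) [Field k] (n : ℕ) (M : Type) [AddCommGroup M]
  [Module (MvPolynomial (Fin n) k) M]

namespace PfAux

open MvPolynomial Finsupp

variable {k : Type} [Field k] {n : ℕ}

/-- The submodule of polynomials all of whose monomials satisfy `P`. -/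
def monSub (k : Type) [Field k] (n : ℕ) (P : Set (Fin n →₀ ℕ))
    (hP : ∀ ⦃b a : Fin n →₀ ℕ⦄, a ∈ P → b + a ∈ P) :
    Submodule (MvPolynomial (Fin n) k) (MvPolynomial (Fin n) k) where
  carrier := {p | ∀ a ∈ p.support, a ∈ P}
  zero_mem' := by simp
  add_mem' := by
    intro p q hp hq a ha
    classical
    rcases Finset.mem_union.1 (MvPolynomial.support_add ha) with h | h
    exacts [hp a h, hq a h]
  smul_mem' := by
    intro r p hp a ha
    classical
    have ha' : a ∈ (r * p).support := by simpa [smul_eq_mul] using ha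
    rcases Finset.mem_add.1 (MvPolynomial.support_mul r p ha') with ⟨x, hx, y, hy, rfl⟩
    exact hP (hp y hy)

theorem mem_monSub {P : Set (Fin n →₀ ℕ)} {hP} {p : MvPolynomial (Fin n) k} :
    p ∈ monSub k n P hP ↔ ∀ a ∈ p.support, a ∈ P := Iff.rfl

theorem monomial_mem_monSub {P : Set (Fin n →₀ ℕ)} {hP} {a : Fin n →₀ ℕ}
    (c : k) (ha : a ∈ P) : monomial a c ∈ monSub k n P hP := by
  intro b hb
  classical
  by_cases hc : c = 0
  · simp [hc] at hb
  · rw [MvPolynomial.support_monomial, if_neg hc, Finset.mem_singleton] at hb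
    subst hb; exact ha

theorem monSub_le_of_monomials {P : Set (Fin n →₀ ℕ)} {hP}
    {N : Submodule (MvPolynomial (Fin n) k) (MvPolynomial (Fin n) k)}
    (h : ∀ a ∈ P, ∀ c : k, monomial a c ∈ N) : monSub k n P hP ≤ N := by
  intro p hp
  rw [MvPolynomial.as_sum p]
  exact Submodule.sum_mem _ fun v hv => h v (hp v hv) _

theorem weight_nonneg {w : Fin n → ℤ} (hw : ∀ i, 0 ≤ w i) (a : Fin n →₀ ℕ) :
    0 ≤ weight w a := by
  rw [Finsupp.weight_apply, Finsupp.sum]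
  exact Finset.sum_nonneg fun i _ => nsmul_nonneg (hw i) _

theorem weight_single (w : Fin n → ℤ) (s : Fin n) (c : ℕ) :
    weight w (Finsupp.single s c) = c • w s := by
  rw [Finsupp.weight_apply]
  exact Finsupp.sum_single_index (zero_smul ℕ _)

theorem hP_weight {w : Fin n → ℤ} (hw : ∀ i, 0 ≤ w i) (e : ℤ) :
    ∀ ⦃b a : Fin n →₀ ℕ⦄, a ∈ {a | e ≤ weight w a} → b + a ∈ {a | e ≤ weight w a} := by
  intro b a ha
  have : weight w (b + a) = weight w b + weight w a := map_add _ _ _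
  have h2 := weight_nonneg hw b
  simp only [Set.mem_setOf_eq] at ha ⊢
  omega

theorem degree_add' (a b : Fin n →₀ ℕ) :
    Finsupp.degree (a + b) = Finsupp.degree a + Finsupp.degree b := by
  have h := DFunLike.congr_fun (Finsupp.degree_eq_weight_one (σ := Fin n) (R := ℕ))
  rw [h, h, h, map_add]

theorem degree_single' (s : Fin n) (c : ℕ) : Finsupp.degree (Finsupp.single s c) = c := by
  have h := DFunLike.congr_fun (Finsupp.degree_eq_weight_one (σ := Fin n) (R := ℕ))
  rw [h, Finsupp.weight_apply, Finsupp.sum_single_index] <;> simp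

theorem hP_degree (j : ℕ) :
    ∀ ⦃b a : Fin n →₀ ℕ⦄, a ∈ {a | j ≤ Finsupp.degree a} → b + a ∈ {a | j ≤ Finsupp.degree a} := by
  intro b a ha
  simp only [Set.mem_setOf_eq, degree_add'] at ha ⊢
  omega

theorem hP_last {n : ℕ} (s : Fin n) (c : ℕ) :
    ∀ ⦃b a : Fin n →₀ ℕ⦄, a ∈ {a | c ≤ a s} → b + a ∈ {a | c ≤ a s} := by
  intro b a ha
  simp only [Set.mem_setOf_eq, Finsupp.add_apply] at ha ⊢
  omega

theorem trunc_eq (w : Fin n → ℤ) (hw : ∀ i, 0 ≤ w i) (e : ℤ) :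
    trunc k n w e = monSub k n {a | e ≤ weight w a} (hP_weight hw e) := by
  apply le_antisymm
  · rw [trunc, Submodule.span_le]
    intro p hp
    simp only [Set.mem_iUnion, SetLike.mem_coe, mem_weightedHomogeneousSubmodule] at hp
    obtain ⟨d, hd, hp⟩ := hp
    intro a ha
    have := hp (MvPolynomial.mem_support_iff.1 ha)
    simp only [Set.mem_setOf_eq, this]
    exact hd
  · apply monSub_le_of_monomials
    intro a ha c
    apply Submodule.subset_span
    refine Set.mem_iUnion.2 ⟨weight w a, Set.mem_iUnion.2 ⟨ha, ?_⟩⟩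
    exact (mem_weightedHomogeneousSubmodule _ _ _ _).2
      (isWeightedHomogeneous_monomial _ _ _ rfl)

theorem X_mem_maxIdeal (i : Fin n) : (X i : MvPolynomial (Fin n) k) ∈ maxIdeal k n :=
  Submodule.subset_span ⟨i, rfl⟩

theorem maxIdeal_le :
    maxIdeal k n ≤ monSub k n {a | 1 ≤ Finsupp.degree a} (hP_degree 1) := by
  rw [maxIdeal, Ideal.span_le]
  rintro g ⟨i, rfl⟩
  intro a ha
  rw [MvPolynomial.support_X, Finset.mem_singleton] at ha
  subst ha
  simp [degree_single']

theorem monomial_mem_maxIdeal_pow :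
    ∀ (j : ℕ) {a : Fin n →₀ ℕ} (c : k), j ≤ Finsupp.degree a →
      monomial a c ∈ (maxIdeal k n) ^ j := by
  intro j
  induction j with
  | zero => intro a c _; simp
  | succ j ih =>
    intro a c hj
    have ha : a ≠ 0 := by
      intro h; subst h; simp [map_zero] at hj
    obtain ⟨i, hi⟩ : ∃ i, a i ≠ 0 := by
      by_contra h; push_neg at h
      exact ha (Finsupp.ext h)
    have hle : Finsupp.single i 1 ≤ a :=
      Finsupp.single_le_iff.2 (Nat.one_le_iff_ne_zero.2 hi)
    have hab : a - Finsupp.single i 1 + Finsupp.single i 1 = a := tsub_add_cancel_of_le hle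
    have hd : Finsupp.degree a = Finsupp.degree (a - Finsupp.single i 1) + 1 := by
      conv_lhs => rw [← hab]
      rw [degree_add', degree_single']
    have hmono : monomial a c = monomial (a - Finsupp.single i 1) c * X i := by
      rw [X, monomial_mul, mul_one, hab]
    rw [pow_succ, hmono]
    exact Ideal.mul_mem_mul (ih c (by omega)) (X_mem_maxIdeal i)

theorem maxIdeal_pow_eq (j : ℕ) :
    (maxIdeal k n) ^ j = monSub k n {a | j ≤ Finsupp.degree a} (hP_degree j) := by
  induction j with
  | zero =>
    rw [pow_zero, Ideal.one_eq_top]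
    apply le_antisymm
    · intro p _ a _; exact Nat.zero_le _
    · exact le_top
  | succ j ih =>
    apply le_antisymm
    · rw [pow_succ]
      apply Submodule.mul_le.2
      intro f hf g hg a ha
      classical
      rcases Finset.mem_add.1 (MvPolynomial.support_mul f g ha) with ⟨x, hx, y, hy, rfl⟩
      have h1 : j ≤ Finsupp.degree x := (ih ▸ hf) x hx
      have h2 : 1 ≤ Finsupp.degree y := maxIdeal_le hg y hy
      simp only [Set.mem_setOf_eq, degree_add']
      omega
    · apply monSub_le_of_monomials
      intro a ha c
      exact monomial_mem_maxIdeal_pow _ c ha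

theorem span_ypow (nA : ℕ) (w : Fin (nA + 1) → ℤ) (c : ℕ) :
    Submodule.span (MvPolynomial (Fin (nA + 1)) k) {yvar k nA ^ c} =
      monSub k (nA + 1) {a | c ≤ a (Fin.last nA)} (hP_last _ c) := by
  have hy : yvar k nA ^ c = monomial (Finsupp.single (Fin.last nA) c) (1 : k) := by
    rw [yvar, X_pow_eq_monomial]
  apply le_antisymm
  · rw [Submodule.span_le]
    intro g hg
    rw [Set.mem_singleton_iff] at hg
    subst hg
    rw [hy]
    exact monomial_mem_monSub _ (by simp)
  · apply monSub_le_of_monomials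
    intro a ha c'
    rw [Submodule.mem_span_singleton]
    refine ⟨monomial (a - Finsupp.single (Fin.last nA) c) c', ?_⟩
    rw [hy, smul_eq_mul, monomial_mul, mul_one,
      tsub_add_cancel_of_le (Finsupp.single_le_iff.2 ha)]

theorem monSub_inf {P Q : Set (Fin n →₀ ℕ)} (hP) (hQ) :
    monSub k n P hP ⊓ monSub k n Q hQ =
      monSub k n (P ∩ Q) (fun _ _ ha => ⟨hP ha.1, hQ ha.2⟩) := by
  ext p
  simp only [Submodule.mem_inf, mem_monSub, Set.mem_inter_iff]
  exact ⟨fun ⟨h1, h2⟩ a ha => ⟨h1 a ha, h2 a ha⟩,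
    fun h => ⟨fun a ha => (h a ha).1, fun a ha => (h a ha).2⟩⟩

theorem monSub_mul {P Q : Set (Fin n →₀ ℕ)} (hP) (hQ) :
    monSub k n P hP * monSub k n Q hQ =
      monSub k n {a | ∃ x ∈ P, ∃ y ∈ Q, x + y = a}
        (fun b a ha => by
          obtain ⟨x, hx, y, hy, rfl⟩ := ha
          exact ⟨b + x, hP hx, y, hy, add_assoc b x y⟩) := by
  apply le_antisymm
  · apply Submodule.mul_le.2
    intro f hf g hg a ha
    classical
    rcases Finset.mem_add.1 (MvPolynomial.support_mul f g ha) with ⟨x, hx, y, hy, rfl⟩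
    exact ⟨x, hf x hx, y, hg y hy, rfl⟩
  · apply monSub_le_of_monomials
    rintro a ⟨x, hx, y, hy, rfl⟩ c
    have : monomial (x + y) c = monomial x c * monomial y (1 : k) := by
      rw [monomial_mul, mul_one]
    rw [this]
    exact Submodule.mul_mem_mul (monomial_mem_monSub _ hx) (monomial_mem_monSub _ hy)

theorem monSub_congr {P Q : Set (Fin n →₀ ℕ)} (hP) (hQ) (h : P = Q) :
    monSub k n P hP = monSub k n Q hQ := by
  subst h; rfl

/-- The combinatorial core. -/
theorem key_set (nA : ℕ) (w : Fin (nA + 1) → ℤ) (hw : ∀ i, 0 < w i)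
    (hd : ∀ l : Fin nA, w (Fin.castSucc l) ≤ w (Fin.last nA))
    (e : ℤ) (i j : ℕ) (hie : (i : ℤ) * w (Fin.last nA) < e) :
    {a : Fin (nA + 1) →₀ ℕ | ∃ x ∈ {a | j ≤ Finsupp.degree a},
        ∃ y ∈ {a | e ≤ weight w a} ∩ {a : Fin (nA + 1) →₀ ℕ | i ≤ a (Fin.last nA)}, x + y = a} ∩
      {a | i + 1 ≤ a (Fin.last nA)} =
    {a : Fin (nA + 1) →₀ ℕ | ∃ x ∈ {a | j ≤ Finsupp.degree a},
        ∃ y ∈ {a | e ≤ weight w a} ∩ {a : Fin (nA + 1) →₀ ℕ | i + 1 ≤ a (Fin.last nA)},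
          x + y = a} := by
  ext a
  simp only [Set.mem_inter_iff, Set.mem_setOf_eq]
  constructor
  · rintro ⟨⟨x, hx, y, ⟨hye, hyi⟩, rfl⟩, hlast⟩
    rw [Finsupp.add_apply] at hlast
    by_cases hcase : i + 1 ≤ y (Fin.last nA)
    · exact ⟨x, hx, y, ⟨hye, hcase⟩, rfl⟩
    · have hyl : y (Fin.last nA) = i := by omega
      have hxl : 1 ≤ x (Fin.last nA) := by omega
      obtain ⟨l, hl⟩ : ∃ l : Fin nA, y (Fin.castSucc l) ≠ 0 := by
        by_contra h; push_neg at h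
        have hy0 : y = Finsupp.single (Fin.last nA) i := by
          ext s
          rcases Fin.eq_castSucc_or_eq_last s with ⟨m, rfl⟩ | rfl
          · rw [h m, Finsupp.single_apply,
              if_neg (Fin.ne_of_gt (Fin.castSucc_lt_last m))]
          · rw [hyl, Finsupp.single_eq_same]
        rw [hy0, weight_single, nsmul_eq_mul] at hye
        exact absurd hye (not_le.2 hie)
      set c := Fin.castSucc l with hc
      have hcne : c ≠ Fin.last nA := Fin.ne_of_lt (Fin.castSucc_lt_last l)
      have hysub : y - Finsupp.single c 1 + Finsupp.single c 1 = y :=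
        tsub_add_cancel_of_le (Finsupp.single_le_iff.2 (Nat.one_le_iff_ne_zero.2 hl))
      have hxsub : x - Finsupp.single (Fin.last nA) 1 + Finsupp.single (Fin.last nA) 1 = x :=
        tsub_add_cancel_of_le (Finsupp.single_le_iff.2 hxl)
      refine ⟨x - Finsupp.single (Fin.last nA) 1 + Finsupp.single c 1, ?_,
        y - Finsupp.single c 1 + Finsupp.single (Fin.last nA) 1, ⟨?_, ?_⟩, ?_⟩
      · show j ≤ Finsupp.degree (x - Finsupp.single (Fin.last nA) 1 + Finsupp.single c 1)
        have h1 : Finsupp.degree x =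
            Finsupp.degree (x - Finsupp.single (Fin.last nA) 1) + 1 := by
          conv_lhs => rw [← hxsub]
          rw [degree_add', degree_single']
        rw [degree_add', degree_single']
        omega
      · show e ≤ weight w (y - Finsupp.single c 1 + Finsupp.single (Fin.last nA) 1)
        have h1 : weight w y = weight w (y - Finsupp.single c 1) + w c := by
          conv_lhs => rw [← hysub]
          rw [map_add, weight_single, one_smul]
        rw [map_add, weight_single, one_smul]
        have h3 := hd l
        rw [← hc] at h3
        omega
      · simp only [Set.mem_setOf_eq, Finsupp.add_apply, Finsupp.tsub_apply,
          Finsupp.single_eq_same, Finsupp.single_eq_of_ne' hcne]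
        omega
      · conv_rhs => rw [← hxsub, ← hysub]
        generalize (x - Finsupp.single (Fin.last nA) 1) = x0
        generalize (y - Finsupp.single c 1) = y0
        abel
  · rintro ⟨x, hx, y, ⟨hye, hyi1⟩, rfl⟩
    refine ⟨⟨x, hx, y, ⟨hye, by omega⟩, rfl⟩, ?_⟩
    rw [Finsupp.add_apply]
    omega

end PfAux

/-- For `0 ≤ i < N = ⌈e/d⌉` and every `j ≥ 0`, the sequence
`0 → m^j M^{(i+1)} → m^j M^{(i)} → m^j A^{(i)} → 0` induced by
`α_i : M^{(i)} → A^{(i)} = M^{(i)}/M^{(i+1)}` is exact.  Equivalently (as stated here),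
the kernel of the induced surjection `m^j M^{(i)} → m^j A^{(i)}` — namely
`m^j M^{(i)} ∩ (y^{i+1})` — equals `m^j M^{(i+1)} = m^j · ker α_i`. -/
theorem pow_smul_filtration_exact (k : Type) [Field k] (nA : ℕ)
    (w : Fin (nA + 1) → ℤ) (hw : ∀ i, 0 < w i)
    (hd : ∀ l : Fin nA, w (Fin.castSucc l) ≤ w (Fin.last nA))
    (e : ℤ) (he : 0 < e) (i : ℕ) (hi : i < ceilDiv e (w (Fin.last nA))) (j : ℕ) :
    ((maxIdeal k (nA + 1)) ^ j • Mfilt k nA w e i) ⊓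
        Submodule.span (MvPolynomial (Fin (nA + 1)) k) {yvar k nA ^ (i + 1)} =
      (maxIdeal k (nA + 1)) ^ j • Mfilt k nA w e (i + 1) := by
  classical
  have hw' : ∀ s, 0 ≤ w s := fun s => (hw s).le
  have hd0 : (0 : ℤ) < w (Fin.last nA) := hw _
  have hie : (i : ℤ) * w (Fin.last nA) < e := by
    have h1 : ((i : ℤ)) < ⌈(e : ℚ) / (w (Fin.last nA) : ℚ)⌉ := Int.lt_toNat.1 hi
    have h2 : ((i : ℚ)) < (e : ℚ) / ((w (Fin.last nA) : ℤ) : ℚ) := by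
      exact_mod_cast Int.lt_ceil.1 h1
    have h3 : ((i : ℚ)) * ((w (Fin.last nA) : ℤ) : ℚ) < (e : ℚ) :=
      (lt_div_iff₀ (by exact_mod_cast hd0)).1 h2
    exact_mod_cast h3
  have hMi : ∀ i' : ℕ, Mfilt k nA w e i' =
      PfAux.monSub k (nA + 1)
        ({a | e ≤ Finsupp.weight w a} ∩ {a : Fin (nA + 1) →₀ ℕ | i' ≤ a (Fin.last nA)})
        (fun _ _ ha => Set.mem_inter (PfAux.hP_weight hw' e (Set.mem_of_mem_inter_left ha))
          (PfAux.hP_last _ i' (Set.mem_of_mem_inter_right ha))) := by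
    intro i'
    rw [Mfilt, PfAux.trunc_eq w hw' e, PfAux.span_ypow nA w i', PfAux.monSub_inf]
  rw [Ideal.smul_eq_mul, Ideal.smul_eq_mul, hMi i, hMi (i + 1),
    PfAux.maxIdeal_pow_eq j, PfAux.monSub_mul, PfAux.monSub_mul,
    PfAux.span_ypow nA w (i + 1), PfAux.monSub_inf]
  exact PfAux.monSub_congr _ _ (PfAux.key_set nA w hw hd e i j hie)
end
end

section
/- Let S = A[y] where A = k[x_1,…,x_{n-1}] is a positively Z-graded polynomial ring, deg(y) = d ≥ deg(x_i) for all i, and m is the maximal ideal of S. Fix e > 0, set M = S_{≥e}, M^{(i)} = M ∩ (y^i), N = ⌈e/d⌉, and A^{(i)} = A_{≥e−di}·S/(y). Then for each 0 ≤ i < N, the short exact sequence 0 → M^{(i+1)} → M^{(i)} → A^{(i)} → 0 induces a short exact sequence of gr_m(S)-modules 0 → gr_m(M^{(i+1)}) → gr_m(M^{(i)}) → gr_m(A^{(i)}) → 0 on associated graded modules. -/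
/-!
Background setup.  `MvPolynomial (Fin n) k` is the polynomial ring `S = k[x_1, …, x_n]`
over the field `k`, graded (possibly nonstandardly) by weights `w : Fin n → ℤ` with
`0 < w i`, with graded maximal ideal `m = maxIdeal k n = (x_1, …, x_n)`.

* `trunc k n w e` is the truncation `S_{≥e} = ⊕_{i ≥ e} S_i`, an `S`-submodule of `S`
  (realized as the `S`-span of the weighted-homogeneous elements of weighted degree `≥ e`;
  for positive weights this span is exactly `⊕_{i ≥ e} S_i`).
* `GrRing k n` is the associated graded ring `gr_m(S) = ⊕_{i≥0} m^i/m^{i+1}`, realized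
  as the quotient `Rees(m) ⧸ m·Rees(m)` of the Rees algebra of `m`; it is a standard
  graded polynomial ring over `k = S/m`.
* `GrMod k n M` is the associated graded module `gr_m(M) = ⊕_{i≥0} m^i M/m^{i+1} M` of an
  `S`-module `M`, realized as the quotient of the Rees module `⊕_i m^i M` by
  `m·(⊕_i m^i M)`; it is a module over `gr_m(S) = GrRing k n`.
* `grDeg1 k n` is the degree-one component `m/m²` of `gr_m(S)`, i.e. the set of linear
  forms of the standard graded ring `gr_m(S)`.
* `HasLinearResolution R Lin N` says that `N` admits a free resolution
  `⋯ → F_{i+1} → F_i → ⋯ → F_0 → N → 0` in which every differential is given by a matrix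
  all of whose entries lie in the set `Lin` of linear forms.  For a module generated in
  degree `0` over a standard graded `k`-algebra `R` (with `Lin = R_1`) this is the usual
  notion of a linear resolution: a graded free resolution `F_•` with `F_i` generated in
  degree `i`.
-/

set_option synthInstance.maxHeartbeats 1000000
set_option maxHeartbeats 1000000

noncomputable section
open MvPolynomial

variable (k : Type) [Field k] (n : ℕ) (M : Type) [AddCommGroup M]
  [Module (MvPolynomial (Fin n) k) M]

section Pieces

variable (k : Type) [Field k] (nA : ℕ)

/-- The `j`-th graded piece `m^j P / m^{j+1} P` of the associated graded module
`gr_m(P)` of a submodule `P ⊆ S` (with its `m`-adic filtration). -/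
def grPiece (P : Submodule (MvPolynomial (Fin (nA + 1)) k) (MvPolynomial (Fin (nA + 1)) k))
    (j : ℕ) : Type :=
  ↥((maxIdeal k (nA + 1)) ^ j • P) ⧸
    Submodule.comap ((maxIdeal k (nA + 1)) ^ j • P).subtype
      ((maxIdeal k (nA + 1)) ^ (j + 1) • P)

instance (P) (j : ℕ) : AddCommGroup (grPiece k nA P j) := by
  unfold grPiece; infer_instance

instance (P) (j : ℕ) : Module (MvPolynomial (Fin (nA + 1)) k) (grPiece k nA P j) := by
  unfold grPiece; infer_instance

/-- The map `m^j P/m^{j+1} P → m^j Q/m^{j+1} Q` of graded pieces induced by an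
inclusion `P ≤ Q`. -/
def grPieceMap {P Q : Submodule (MvPolynomial (Fin (nA + 1)) k)
      (MvPolynomial (Fin (nA + 1)) k)} (h : P ≤ Q) (j : ℕ) :
    grPiece k nA P j →ₗ[MvPolynomial (Fin (nA + 1)) k] grPiece k nA Q j :=
  Submodule.mapQ _ _ (Submodule.inclusion (Submodule.smul_mono le_rfl h))
    (fun x hx => by
      simpa using Submodule.smul_mono (le_refl ((maxIdeal k (nA + 1)) ^ (j + 1))) h hx)

/-- The `j`-th graded piece `m^j Ā / m^{j+1} Ā` of `gr_m(Ā)`, where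
`Ā = P/(P ∩ (y^t))` is the image of `P` in `S/(y^t)`. -/
def grPieceIm (P : Submodule (MvPolynomial (Fin (nA + 1)) k)
      (MvPolynomial (Fin (nA + 1)) k)) (t : ℕ) (j : ℕ) : Type :=
  ↥(Submodule.map (Submodule.mkQ
        (Submodule.span (MvPolynomial (Fin (nA + 1)) k) {yvar k nA ^ t}))
      ((maxIdeal k (nA + 1)) ^ j • P)) ⧸
    Submodule.comap (Submodule.map (Submodule.mkQ
        (Submodule.span (MvPolynomial (Fin (nA + 1)) k) {yvar k nA ^ t}))
      ((maxIdeal k (nA + 1)) ^ j • P)).subtype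
      (Submodule.map (Submodule.mkQ
          (Submodule.span (MvPolynomial (Fin (nA + 1)) k) {yvar k nA ^ t}))
        ((maxIdeal k (nA + 1)) ^ (j + 1) • P))

instance (P) (t j : ℕ) : AddCommGroup (grPieceIm k nA P t j) := by
  unfold grPieceIm; infer_instance

instance (P) (t j : ℕ) : Module (MvPolynomial (Fin (nA + 1)) k) (grPieceIm k nA P t j) := by
  unfold grPieceIm; infer_instance

/-- The map of graded pieces `m^j P/m^{j+1} P → m^j Ā/m^{j+1} Ā` induced by the
canonical surjection `P → Ā = P/(P ∩ (y^t))`. -/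
def grPieceToIm (P : Submodule (MvPolynomial (Fin (nA + 1)) k)
      (MvPolynomial (Fin (nA + 1)) k)) (t : ℕ) (j : ℕ) :
    grPiece k nA P j →ₗ[MvPolynomial (Fin (nA + 1)) k] grPieceIm k nA P t j :=
  Submodule.mapQ _ _ ((Submodule.mkQ _).restrict
      (fun x hx => Submodule.mem_map_of_mem hx))
    (fun x hx => by exact Submodule.mem_map_of_mem hx)

end Pieces


/-! ### Auxiliary machinery for the proof -/

namespace GrAux

open Finsupp Pointwise

variable {k : Type} [Field k] {nA : ℕ}

/-- Monomial ideal generated by a set of exponents. -/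
def mSpan (k : Type) [Field k] (nA : ℕ) (T : Set (Fin (nA + 1) →₀ ℕ)) :
    Submodule (MvPolynomial (Fin (nA + 1)) k) (MvPolynomial (Fin (nA + 1)) k) :=
  Ideal.span ((fun s => MvPolynomial.monomial s (1 : k)) '' T)

lemma mem_mSpan {T : Set (Fin (nA + 1) →₀ ℕ)} {p : MvPolynomial (Fin (nA + 1)) k} :
    p ∈ mSpan k nA T ↔ ∀ a ∈ p.support, ∃ s ∈ T, s ≤ a :=
  MvPolynomial.mem_ideal_span_monomial_image

/-- Upward closed sets of exponents. -/
def UpC {nA : ℕ} (T : Set (Fin (nA + 1) →₀ ℕ)) : Prop :=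
  ∀ ⦃a b : Fin (nA + 1) →₀ ℕ⦄, a ∈ T → a ≤ b → b ∈ T

lemma mem_mSpan_up {T : Set (Fin (nA + 1) →₀ ℕ)} (hT : UpC T)
    {p : MvPolynomial (Fin (nA + 1)) k} :
    p ∈ mSpan k nA T ↔ ∀ a ∈ p.support, a ∈ T := by
  rw [mem_mSpan]
  constructor
  · intro h a ha
    obtain ⟨s, hs, hsa⟩ := h a ha
    exact hT hs hsa
  · intro h a ha
    exact ⟨a, h a ha, le_rfl⟩

lemma mSpan_mul (T U : Set (Fin (nA + 1) →₀ ℕ)) :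
    mSpan k nA T * mSpan k nA U = mSpan k nA (T + U) := by
  unfold mSpan
  rw [Ideal.span_mul_span']
  congr 1
  ext p
  constructor
  · rintro ⟨_, ⟨t, ht, rfl⟩, _, ⟨u, hu, rfl⟩, rfl⟩
    exact ⟨t + u, ⟨t, ht, u, hu, rfl⟩,
      by simp [MvPolynomial.monomial_mul]⟩
  · rintro ⟨_, ⟨t, ht, u, hu, rfl⟩, rfl⟩
    exact ⟨_, ⟨t, ht, rfl⟩, _, ⟨u, hu, rfl⟩,
      by simp [MvPolynomial.monomial_mul]⟩

lemma mSpan_sup (T U : Set (Fin (nA + 1) →₀ ℕ)) :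
    mSpan k nA T ⊔ mSpan k nA U = mSpan k nA (T ∪ U) := by
  unfold mSpan
  rw [Set.image_union, Ideal.span_union]

lemma deg_single (x : Fin (nA + 1)) (m : ℕ) :
    (Finsupp.single x m).degree = m := by
  simp [Finsupp.degree_eq_weight_one, Finsupp.weight_apply,
    Finsupp.sum_single_index]

lemma deg_add (u v : Fin (nA + 1) →₀ ℕ) :
    (u + v).degree = u.degree + v.degree := by
  simp [Finsupp.degree_eq_weight_one, map_add]

lemma maxIdeal_eq : maxIdeal k (nA + 1) = mSpan k nA {ν | ν.degree = 1} := by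
  have h1 : Set.range (MvPolynomial.X : Fin (nA + 1) → MvPolynomial (Fin (nA + 1)) k) =
      (fun s => MvPolynomial.monomial s (1 : k)) ''
        (Set.range fun l : Fin (nA + 1) => Finsupp.single l 1) := by
    rw [← Set.range_comp]
    rfl
  have h2 : (Set.range fun l : Fin (nA + 1) => Finsupp.single l (1 : ℕ)) =
      {ν : Fin (nA + 1) →₀ ℕ | ν.degree = 1} := by
    ext ν
    constructor
    · rintro ⟨l, rfl⟩
      exact deg_single l 1
    · intro hν
      simp only [Set.mem_setOf_eq] at hν
      have hne : ν.support.Nonempty := by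
        rw [Finsupp.support_nonempty_iff]
        intro h0
        rw [h0] at hν
        simp at hν
      obtain ⟨l, hl⟩ := hne
      refine ⟨l, ?_⟩
      have hl1 : 1 ≤ ν l := Nat.one_le_iff_ne_zero.mpr (Finsupp.mem_support_iff.mp hl)
      have hld : ν l ≤ ν.degree := Finsupp.le_degree l ν
      ext x
      rcases eq_or_ne x l with rfl | hx
      · rw [Finsupp.single_eq_same]
        omega
      · rw [Finsupp.single_eq_of_ne' (Ne.symm hx)]
        by_contra hx0
        have hx1 : 1 ≤ ν x := Nat.one_le_iff_ne_zero.mpr (Ne.symm hx0)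
        have hxs : x ∈ ν.support := Finsupp.mem_support_iff.mpr (Ne.symm hx0)
        have hsub : ({l, x} : Finset (Fin (nA + 1))) ⊆ ν.support := by
          intro z hz
          simp only [Finset.mem_insert, Finset.mem_singleton] at hz
          rcases hz with rfl | rfl
          · exact hl
          · exact hxs
        have hsum : ν l + ν x ≤ ν.degree := by
          rw [← Finset.sum_pair (Ne.symm hx)]
          exact Finset.sum_le_sum_of_subset hsub
        omega
  rw [maxIdeal, h1, ← h2]
  rfl

lemma maxIdeal_pow (j : ℕ) :
    (maxIdeal k (nA + 1)) ^ j = mSpan k nA {ν | ν.degree = j} := by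
  induction j with
  | zero =>
    have h0 : {ν : Fin (nA + 1) →₀ ℕ | ν.degree = 0} = {0} := by
      ext ν
      simp [Finsupp.degree_eq_zero_iff]
    rw [pow_zero, h0]
    unfold mSpan
    rw [Set.image_singleton, MvPolynomial.monomial_zero', MvPolynomial.C_1,
      Ideal.span_singleton_one, Ideal.one_eq_top]
  | succ j ih =>
    have hstep : {ν : Fin (nA + 1) →₀ ℕ | ν.degree = j} +
        {ν : Fin (nA + 1) →₀ ℕ | ν.degree = 1} =
        {ν : Fin (nA + 1) →₀ ℕ | ν.degree = j + 1} := by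
      ext a
      constructor
      · rintro ⟨u, hu, v, hv, rfl⟩
        simp only [Set.mem_setOf_eq] at hu hv ⊢
        rw [deg_add, hu, hv]
      · intro ha
        simp only [Set.mem_setOf_eq] at ha
        have hne : a.support.Nonempty := by
          rw [Finsupp.support_nonempty_iff]
          intro h0
          rw [h0] at ha
          simp at ha
        obtain ⟨l, hl⟩ := hne
        have hle : Finsupp.single l 1 ≤ a :=
          Finsupp.single_le_iff.mpr (Nat.one_le_iff_ne_zero.mpr (Finsupp.mem_support_iff.mp hl))
        have hcan : a - Finsupp.single l 1 + Finsupp.single l 1 = a :=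
          tsub_add_cancel_of_le hle
        refine ⟨a - Finsupp.single l 1, ?_, Finsupp.single l 1, deg_single l 1, hcan⟩
        have := congrArg Finsupp.degree hcan
        rw [deg_add, deg_single] at this
        simp only [Set.mem_setOf_eq]
        omega
    rw [pow_succ, ih, maxIdeal_eq, mSpan_mul, hstep]

variable (w : Fin (nA + 1) → ℤ)

lemma weight_nonneg (hw : ∀ i, 0 < w i) (a : Fin (nA + 1) →₀ ℕ) :
    0 ≤ weight w a := by
  rw [Finsupp.weight_apply]
  apply Finset.sum_nonneg
  intro i _
  exact nsmul_nonneg (le_of_lt (hw i)) _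

lemma weight_mono (hw : ∀ i, 0 < w i) {a b : Fin (nA + 1) →₀ ℕ} (hab : a ≤ b) :
    weight w a ≤ weight w b := by
  have h := congrArg (weight w) (tsub_add_cancel_of_le hab)
  rw [map_add] at h
  have h2 := weight_nonneg w hw (b - a)
  omega

lemma weight_sub {a ν : Fin (nA + 1) →₀ ℕ} (hν : ν ≤ a) :
    weight w (a - ν) = weight w a - weight w ν := by
  have h := congrArg (weight w) (tsub_add_cancel_of_le hν)
  rw [map_add] at h
  omega

lemma weight_single (x : Fin (nA + 1)) (m : ℕ) :
    weight w (Finsupp.single x m) = (m : ℤ) * w x := by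
  rw [Finsupp.weight_apply, Finsupp.sum_single_index (by simp), nsmul_eq_mul]

/-- Exponent set of the truncation intersected with `(y^t)`. -/
def Tset (w : Fin (nA + 1) → ℤ) (e : ℤ) (t : ℕ) : Set (Fin (nA + 1) →₀ ℕ) :=
  {a | e ≤ weight w a ∧ t ≤ a (Fin.last nA)}

/-- Exponent set of `(y^t)`. -/
def Yset (nA : ℕ) (t : ℕ) : Set (Fin (nA + 1) →₀ ℕ) :=
  {a | t ≤ a (Fin.last nA)}

/-- Exponent set of `m^j • Mfilt t`. -/
def Cset (w : Fin (nA + 1) → ℤ) (e : ℤ) (j t : ℕ) : Set (Fin (nA + 1) →₀ ℕ) :=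
  {a | ∃ ν, ν ≤ a ∧ ν.degree = j ∧ e ≤ weight w (a - ν) ∧ t ≤ (a - ν) (Fin.last nA)}

lemma upC_Yset (t : ℕ) : UpC (Yset nA t) := by
  intro a b ha hab
  exact le_trans ha (Finsupp.le_def.mp hab _)

lemma upC_Tset (hw : ∀ i, 0 < w i) (e : ℤ) (t : ℕ) : UpC (Tset w e t) := by
  intro a b ha hab
  exact ⟨le_trans ha.1 (weight_mono w hw hab), le_trans ha.2 (Finsupp.le_def.mp hab _)⟩

lemma upC_Cset (hw : ∀ i, 0 < w i) (e : ℤ) (j t : ℕ) : UpC (Cset w e j t) := by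
  rintro a b ⟨ν, hνa, hdeg, hW, hL⟩ hab
  have hsub : a - ν ≤ b - ν := tsub_le_tsub_right hab ν
  exact ⟨ν, le_trans hνa hab, hdeg, le_trans hW (weight_mono w hw hsub),
    le_trans hL (Finsupp.le_def.mp hsub _)⟩

lemma upC_W (hw : ∀ i, 0 < w i) (e : ℤ) : UpC {a : Fin (nA + 1) →₀ ℕ | e ≤ weight w a} :=
  fun _ _ ha hab => le_trans ha (weight_mono w hw hab)

lemma trunc_eq (hw : ∀ i, 0 < w i) (e : ℤ) :
    trunc k (nA + 1) w e = mSpan k nA {a | e ≤ weight w a} := by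
  apply le_antisymm
  · rw [trunc, Submodule.span_le]
    intro g hg
    rw [Set.mem_iUnion₂] at hg
    obtain ⟨D, hD, hgD⟩ := hg
    have hgh : MvPolynomial.IsWeightedHomogeneous w g D := hgD
    rw [SetLike.mem_coe, mem_mSpan_up (upC_W w hw e)]
    intro a ha
    have := hgh (MvPolynomial.mem_support_iff.mp ha)
    simp only [Set.mem_setOf_eq]
    rw [this]
    exact hD
  · rw [mSpan, Ideal.span_le]
    rintro _ ⟨s, hs, rfl⟩
    apply Submodule.subset_span
    rw [Set.mem_iUnion₂]
    exact ⟨weight w s, hs, MvPolynomial.isWeightedHomogeneous_monomial w s 1 rfl⟩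

lemma spanY_eq (t : ℕ) :
    Submodule.span (MvPolynomial (Fin (nA + 1)) k) {yvar k nA ^ t} =
      mSpan k nA (Yset nA t) := by
  have h1 : yvar k nA ^ t =
      MvPolynomial.monomial (Finsupp.single (Fin.last nA) t) (1 : k) := by
    rw [yvar, MvPolynomial.X_pow_eq_monomial]
  have h2 : Submodule.span (MvPolynomial (Fin (nA + 1)) k) {yvar k nA ^ t} =
      mSpan k nA {Finsupp.single (Fin.last nA) t} := by
    rw [mSpan, Set.image_singleton, h1]
  rw [h2]
  ext p
  rw [mem_mSpan, mem_mSpan_up (upC_Yset t)]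
  constructor
  · intro h a ha
    obtain ⟨s, hs, hsa⟩ := h a ha
    rw [Set.mem_singleton_iff] at hs
    subst hs
    exact Finsupp.single_le_iff.mp hsa
  · intro h a ha
    exact ⟨_, rfl, Finsupp.single_le_iff.mpr (h a ha)⟩

lemma Mfilt_eq (hw : ∀ i, 0 < w i) (e : ℤ) (t : ℕ) :
    Mfilt k nA w e t = mSpan k nA (Tset w e t) := by
  rw [Mfilt, trunc_eq w hw, spanY_eq]
  ext p
  rw [Submodule.mem_inf, mem_mSpan_up (upC_W w hw e), mem_mSpan_up (upC_Yset t),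
    mem_mSpan_up (upC_Tset w hw e t)]
  constructor
  · rintro ⟨h1, h2⟩ a ha
    exact ⟨h1 a ha, h2 a ha⟩
  · intro h
    exact ⟨fun a ha => (h a ha).1, fun a ha => (h a ha).2⟩

lemma add_Dset_Tset (e : ℤ) (j t : ℕ) :
    {ν : Fin (nA + 1) →₀ ℕ | ν.degree = j} + Tset w e t = Cset w e j t := by
  ext a
  constructor
  · rintro ⟨ν, hν, u, hu, rfl⟩
    simp only [Set.mem_setOf_eq] at hν
    refine ⟨ν, le_add_right le_rfl, hν, ?_, ?_⟩
    · rw [add_tsub_cancel_left]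
      exact hu.1
    · rw [add_tsub_cancel_left]
      exact hu.2
  · rintro ⟨ν, hν, hdeg, hW, hL⟩
    exact ⟨ν, hdeg, a - ν, ⟨hW, hL⟩, add_tsub_cancel_of_le hν⟩

lemma smul_Mfilt (hw : ∀ i, 0 < w i) (e : ℤ) (j t : ℕ) :
    (maxIdeal k (nA + 1)) ^ j • Mfilt k nA w e t = mSpan k nA (Cset w e j t) := by
  rw [Ideal.smul_eq_mul, maxIdeal_pow, Mfilt_eq w hw, mSpan_mul, add_Dset_Tset]

lemma upC_union {T U : Set (Fin (nA + 1) →₀ ℕ)} (hT : UpC T) (hU : UpC U) :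
    UpC (T ∪ U) := by
  rintro a b (h | h) hab
  · exact Or.inl (hT h hab)
  · exact Or.inr (hU h hab)

/-- The key combinatorial exchange lemma. -/
lemma key (hw : ∀ i, 0 < w i)
    (hd : ∀ l : Fin nA, w (Fin.castSucc l) ≤ w (Fin.last nA))
    (e : ℤ) (i : ℕ) (hide : (i : ℤ) * w (Fin.last nA) < e)
    (j : ℕ) {a : Fin (nA + 1) →₀ ℕ} (haL : i + 1 ≤ a (Fin.last nA))
    (ha : a ∈ Cset w e j i) : a ∈ Cset w e j (i + 1) := by
  obtain ⟨ν, hν, hdeg, hW, hL⟩ := ha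
  by_cases h1 : i + 1 ≤ (a - ν) (Fin.last nA)
  · exact ⟨ν, hν, hdeg, hW, h1⟩
  have hbeq : ∀ x, (a - ν) x = a x - ν x := fun x => Finsupp.tsub_apply a ν x
  have hνa : ∀ x, ν x ≤ a x := Finsupp.le_def.mp hν
  have hbL : (a - ν) (Fin.last nA) = i := by
    omega
  have hνL : 1 ≤ ν (Fin.last nA) := by
    have h2 := hbeq (Fin.last nA)
    have h3 := hνa (Fin.last nA)
    omega
  by_cases h2 : ∃ l : Fin nA, 1 ≤ (a - ν) (Fin.castSucc l)
  · obtain ⟨l, hl⟩ := h2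
    have hcL : Fin.castSucc l ≠ Fin.last nA := (Fin.castSucc_lt_last l).ne
    set ν' := ν - Finsupp.single (Fin.last nA) 1 + Finsupp.single (Fin.castSucc l) 1
      with hν'def
    have hν'x : ∀ x, ν' x = ν x - (Finsupp.single (Fin.last nA) 1) x +
        (Finsupp.single (Fin.castSucc l) 1) x := by
      intro x
      simp [hν'def, Finsupp.add_apply, Finsupp.tsub_apply]
    have hkey : ν' + Finsupp.single (Fin.last nA) 1 =
        ν + Finsupp.single (Fin.castSucc l) 1 := by
      ext x
      have h3 := hν'x x
      rcases eq_or_ne x (Fin.last nA) with rfl | hxL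
      · simp only [Finsupp.add_apply, Finsupp.single_eq_same,
          Finsupp.single_eq_of_ne' hcL] at h3 ⊢
        omega
      · rcases eq_or_ne x (Fin.castSucc l) with rfl | hxc
        · simp only [Finsupp.add_apply, Finsupp.single_eq_same,
            Finsupp.single_eq_of_ne' (Ne.symm hxL)] at h3 ⊢
          omega
        · simp only [Finsupp.add_apply, Finsupp.single_eq_of_ne' (Ne.symm hxL),
            Finsupp.single_eq_of_ne' (Ne.symm hxc)] at h3 ⊢
          omega
    have hdeg' : ν'.degree = j := by
      have h4 := congrArg Finsupp.degree hkey
      simp only [deg_add, deg_single] at h4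
      omega
    have hW' : weight w ν' + w (Fin.last nA) = weight w ν + w (Fin.castSucc l) := by
      have h4 := congrArg (weight w) hkey
      simp only [map_add, weight_single] at h4
      push_cast at h4
      omega
    have hν'a : ν' ≤ a := by
      rw [Finsupp.le_def]
      intro x
      have h3 := hν'x x
      have h4 := hνa x
      have h5 := hbeq x
      rcases eq_or_ne x (Fin.last nA) with rfl | hxL
      · rw [Finsupp.single_eq_same, Finsupp.single_eq_of_ne' hcL] at h3
        omega
      · rcases eq_or_ne x (Fin.castSucc l) with rfl | hxc
        · rw [Finsupp.single_eq_of_ne' (Ne.symm hcL), Finsupp.single_eq_same] at h3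
          have h6 := hbeq (Fin.castSucc l)
          omega
        · rw [Finsupp.single_eq_of_ne' (Ne.symm hxL),
            Finsupp.single_eq_of_ne' (Ne.symm hxc)] at h3
          omega
    have hν'L : ν' (Fin.last nA) = ν (Fin.last nA) - 1 := by
      have h3 := hν'x (Fin.last nA)
      rw [Finsupp.single_eq_same, Finsupp.single_eq_of_ne' hcL] at h3
      omega
    refine ⟨ν', hν'a, hdeg', ?_, ?_⟩
    · rw [weight_sub w hν'a]
      rw [weight_sub w hν] at hW
      have hwl := hd l
      omega
    · have h3 := Finsupp.tsub_apply a ν' (Fin.last nA)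
      have h4 := hνa (Fin.last nA)
      have h5 := hbeq (Fin.last nA)
      omega
  · push_neg at h2
    exfalso
    have hb : a - ν = Finsupp.single (Fin.last nA) i := by
      ext x
      refine Fin.lastCases ?_ ?_ x
      · rw [Finsupp.single_eq_same]
        exact hbL
      · intro l
        rw [Finsupp.single_eq_of_ne' (Fin.castSucc_lt_last l).ne']
        have := h2 l
        omega
    rw [hb, weight_single] at hW
    linarith

end GrAux

section MkLemmas

variable {k : Type} [Field k] {nA : ℕ}

lemma grPieceMap_mk {P Q : Submodule (MvPolynomial (Fin (nA + 1)) k)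
      (MvPolynomial (Fin (nA + 1)) k)} (h : P ≤ Q) (j : ℕ)
    (x : ↥((maxIdeal k (nA + 1)) ^ j • P)) :
    grPieceMap k nA h j (Submodule.Quotient.mk x) =
      Submodule.Quotient.mk (Submodule.inclusion (Submodule.smul_mono le_rfl h) x) :=
  rfl

lemma grPieceToIm_mk (P : Submodule (MvPolynomial (Fin (nA + 1)) k)
      (MvPolynomial (Fin (nA + 1)) k)) (t j : ℕ)
    (x : ↥((maxIdeal k (nA + 1)) ^ j • P)) :
    grPieceToIm k nA P t j (Submodule.Quotient.mk x) =
      Submodule.Quotient.mk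
        (((Submodule.span (MvPolynomial (Fin (nA + 1)) k) {yvar k nA ^ t}).mkQ).restrict
          (fun x hx => Submodule.mem_map_of_mem hx) x) :=
  rfl

end MkLemmas

/-- For `0 ≤ i < N = ⌈e/d⌉`, the short exact sequence
`0 → M^{(i+1)} → M^{(i)} → A^{(i)} → 0` induces a short exact sequence
`0 → gr_m(M^{(i+1)}) → gr_m(M^{(i)}) → gr_m(A^{(i)}) → 0` of `gr_m(S)`-modules.
Since the induced maps of associated graded modules are degree-preserving, this is
stated degreewise: for every degree `j`, the induced sequence of `j`-th graded pieces
`0 → m^j M^{(i+1)}/m^{j+1} M^{(i+1)} → m^j M^{(i)}/m^{j+1} M^{(i)} →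
m^j A^{(i)}/m^{j+1} A^{(i)} → 0` (with the maps induced by the inclusion
`M^{(i+1)} ⊆ M^{(i)}` and the surjection `M^{(i)} → A^{(i)} = M^{(i)}/M^{(i+1)}`,
realizing `A^{(i)}` as the image of `M^{(i)}` in `S/(y^{i+1})`) is exact. -/
theorem grMod_filtration_ses (k : Type) [Field k] (nA : ℕ)
    (w : Fin (nA + 1) → ℤ) (hw : ∀ i, 0 < w i)
    (hd : ∀ l : Fin nA, w (Fin.castSucc l) ≤ w (Fin.last nA))
    (e : ℤ) (he : 0 < e) (i : ℕ) (hi : i < ceilDiv e (w (Fin.last nA)))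
    (h : Mfilt k nA w e (i + 1) ≤ Mfilt k nA w e i) (j : ℕ) :
    Function.Injective (grPieceMap k nA h j) ∧
    LinearMap.range (grPieceMap k nA h j) =
      LinearMap.ker (grPieceToIm k nA (Mfilt k nA w e i) (i + 1) j) ∧
    Function.Surjective (grPieceToIm k nA (Mfilt k nA w e i) (i + 1) j) := by
  classical
  have hide : (i : ℤ) * w (Fin.last nA) < e := by
    rw [ceilDiv] at hi
    have h1 : (i : ℤ) < ⌈(e : ℚ) / ((w (Fin.last nA) : ℤ) : ℚ)⌉ := Int.lt_toNat.mp hi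
    have h2 := Int.lt_ceil.mp h1
    have hd0 : (0 : ℚ) < ((w (Fin.last nA) : ℤ) : ℚ) := by
      exact_mod_cast hw (Fin.last nA)
    rw [lt_div_iff₀ hd0] at h2
    exact_mod_cast h2
  set P := Mfilt k nA w e i with hPdef
  set P' := Mfilt k nA w e (i + 1) with hP'def
  set Q := Submodule.span (MvPolynomial (Fin (nA + 1)) k) {yvar k nA ^ (i + 1)} with hQdef
  have hmem : ∀ (s t : ℕ) (v : MvPolynomial (Fin (nA + 1)) k),
      v ∈ (maxIdeal k (nA + 1)) ^ s • Mfilt k nA w e t ↔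
        ∀ a ∈ v.support, a ∈ GrAux.Cset w e s t := by
    intro s t v
    rw [GrAux.smul_Mfilt w hw, GrAux.mem_mSpan_up (GrAux.upC_Cset w hw e s t)]
  have F1 : ∀ v : MvPolynomial (Fin (nA + 1)) k,
      v ∈ (maxIdeal k (nA + 1)) ^ j • P' →
      v ∈ (maxIdeal k (nA + 1)) ^ (j + 1) • P →
      v ∈ (maxIdeal k (nA + 1)) ^ (j + 1) • P' := by
    intro v h1 h2
    rw [hmem] at h1 h2 ⊢
    intro a ha
    obtain ⟨ν, hν, -, -, hL⟩ := h1 a ha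
    have hsub : (a - ν) (Fin.last nA) ≤ a (Fin.last nA) :=
      Finsupp.le_def.mp tsub_le_self _
    exact GrAux.key w hw hd e i hide (j + 1) (le_trans hL hsub) (h2 a ha)
  have F2 : ∀ v : MvPolynomial (Fin (nA + 1)) k,
      v ∈ (maxIdeal k (nA + 1)) ^ j • P →
      v ∈ ((maxIdeal k (nA + 1)) ^ (j + 1) • P ⊔ Q) →
      v ∈ ((maxIdeal k (nA + 1)) ^ (j + 1) • P ⊔ (maxIdeal k (nA + 1)) ^ j • P') := by
    intro v h1 h2
    rw [hmem] at h1
    rw [hQdef, hPdef, GrAux.smul_Mfilt w hw, GrAux.spanY_eq, GrAux.mSpan_sup,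
      GrAux.mem_mSpan_up (GrAux.upC_union (GrAux.upC_Cset w hw e _ _)
        (GrAux.upC_Yset _))] at h2
    rw [hPdef, hP'def, GrAux.smul_Mfilt w hw, GrAux.smul_Mfilt w hw, GrAux.mSpan_sup,
      GrAux.mem_mSpan_up (GrAux.upC_union (GrAux.upC_Cset w hw e _ _)
        (GrAux.upC_Cset w hw e _ _))]
    intro a ha
    rcases h2 a ha with hc | hy
    · exact Or.inl hc
    · exact Or.inr (GrAux.key w hw hd e i hide j hy (h1 a ha))
  have hP'Q : P' ≤ Q := inf_le_right
  refine ⟨?_, ?_, ?_⟩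
  · -- injectivity
    rw [← LinearMap.ker_eq_bot, LinearMap.ker_eq_bot']
    intro x hx
    obtain ⟨⟨v, hv⟩, rfl⟩ := Submodule.Quotient.mk_surjective _ x
    erw [grPieceMap_mk, Submodule.Quotient.mk_eq_zero, Submodule.mem_comap] at hx
    simp only [Submodule.coe_subtype, Submodule.coe_inclusion] at hx
    erw [Submodule.Quotient.mk_eq_zero, Submodule.mem_comap]
    simp only [Submodule.coe_subtype]
    exact F1 v hv hx
  · -- range = ker
    ext x
    simp only [LinearMap.mem_range, LinearMap.mem_ker]
    constructor
    · rintro ⟨y, rfl⟩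
      obtain ⟨⟨v, hv⟩, rfl⟩ := Submodule.Quotient.mk_surjective _ y
      erw [grPieceMap_mk, grPieceToIm_mk, Submodule.Quotient.mk_eq_zero,
        Submodule.mem_comap]
      simp only [Submodule.coe_subtype, LinearMap.restrict_coe_apply,
        Submodule.coe_inclusion, Submodule.mkQ_apply]
      have hvQ : v ∈ Q := hP'Q (Submodule.smul_le_right hv)
      rw [show (Submodule.Quotient.mk v : _ ⧸ Q) = 0 from
        (Submodule.Quotient.mk_eq_zero Q).mpr hvQ]
      exact Submodule.zero_mem _
    · intro hx
      obtain ⟨⟨v, hv⟩, rfl⟩ := Submodule.Quotient.mk_surjective _ x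
      erw [grPieceToIm_mk, Submodule.Quotient.mk_eq_zero, Submodule.mem_comap] at hx
      simp only [Submodule.coe_subtype, LinearMap.restrict_coe_apply,
        Submodule.mkQ_apply] at hx
      obtain ⟨u, hu, huv⟩ := hx
      have hvsum : v ∈ ((maxIdeal k (nA + 1)) ^ (j + 1) • P ⊔ Q) := by
        rw [Submodule.mem_sup]
        refine ⟨u, hu, v - u, ?_, by ring⟩
        have : u - v ∈ Q := (Submodule.Quotient.eq Q).mp huv
        simpa using Submodule.neg_mem Q this
      have hv2 := F2 v hv hvsum
      rw [Submodule.mem_sup] at hv2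
      obtain ⟨s, hs, t, ht, hst⟩ := hv2
      refine ⟨Submodule.Quotient.mk ⟨t, ht⟩, ?_⟩
      erw [grPieceMap_mk, Submodule.Quotient.eq, Submodule.mem_comap]
      simp only [Submodule.coe_subtype, AddSubgroupClass.coe_sub, Submodule.coe_inclusion]
      have : (t : MvPolynomial (Fin (nA + 1)) k) - v = -s := by
        rw [← hst]; ring
      rw [this]
      exact Submodule.neg_mem _ hs
  · -- surjectivity
    intro z
    obtain ⟨⟨q, hq⟩, rfl⟩ := Submodule.Quotient.mk_surjective _ z
    obtain ⟨v, hv, rfl⟩ := hq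
    refine ⟨Submodule.Quotient.mk ⟨v, hv⟩, ?_⟩
    rw [grPieceToIm_mk]
    rfl
end
end
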